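/- arXiv:1712.04253 — 4 statements merged into one kernel-verified Lean document; each statement's English description precedes it below -/
import Mathlib

section
/- For any real sequence x = (x_0, x_1, ...) in l^2 and any a > 1/2, the double sum over i,j ≥ 0 of |x_i||x_j|/(i+j+a) is at most π·(sum of x_k^2). -/
open Real

private lemma contExp (c : ℂ) : Continuous fun θ : ℝ => Complex.exp (c * θ) :=
  Complex.continuous_exp.comp (continuous_const.mul Complex.continuous_ofReal)

private lemma int_exp (c : ℂ) (hc : c ≠ 0) :
    ∫ θ in (0:ℝ)..π, Complex.exp (c * θ) = (Complex.exp (c * π) - 1) / c := by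
  rw [integral_exp_mul_complex hc]; norm_num

private lemma exp_odd (j k : ℕ) :
    Complex.exp ((2 * (j : ℂ) + 2 * (k : ℂ) + 1) * Complex.I * (π : ℝ)) = -1 := by
  have h : (2 * (j : ℂ) + 2 * (k : ℂ) + 1) * Complex.I * (π : ℝ)
      = ((2 * (j + k) + 1 : ℕ) : ℂ) * ((π : ℂ) * Complex.I) := by push_cast; ring
  rw [h, Complex.exp_nat_mul, Complex.exp_pi_mul_I]
  exact Odd.neg_one_pow ⟨j + k, by ring⟩

private lemma exp_even (j k : ℕ) :
    Complex.exp ((2 * (j : ℂ) - 2 * (k : ℂ)) * Complex.I * (π : ℝ)) = 1 := by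
  have h : (2 * (j : ℂ) - 2 * (k : ℂ)) * Complex.I * (π : ℝ)
      = (((j : ℤ) - (k : ℤ) : ℤ) : ℂ) * (2 * (π : ℂ) * Complex.I) := by push_cast; ring
  rw [h, Complex.exp_int_mul_two_pi_mul_I]

/-- termwise integral for the odd frequencies -/
private lemma int_odd (j k : ℕ) :
    ∫ θ in (0:ℝ)..π,
      Complex.exp (((2 * (j : ℂ) + 2 * (k : ℂ) + 1) * Complex.I) * θ)
      = 2 * Complex.I / (2 * (j : ℂ) + 2 * (k : ℂ) + 1) := by
  have hM : (2 * (j : ℂ) + 2 * (k : ℂ) + 1) ≠ 0 := by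
    have : ((2 * (j + k) + 1 : ℕ) : ℂ) ≠ 0 :=
      Nat.cast_ne_zero.mpr (by omega)
    intro h; apply this; push_cast; linear_combination h
  have hc : (2 * (j : ℂ) + 2 * (k : ℂ) + 1) * Complex.I ≠ 0 :=
    mul_ne_zero hM Complex.I_ne_zero
  rw [int_exp _ hc]
  rw [show (2 * (j : ℂ) + 2 * (k : ℂ) + 1) * Complex.I * (π:ℝ)
      = (2 * (j : ℂ) + 2 * (k : ℂ) + 1) * Complex.I * (π:ℝ) from rfl, exp_odd j k]
  field_simp
  ring_nf
  rw [Complex.I_sq]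
  ring

/-- termwise integral for the difference frequencies -/
private lemma int_diff (j k : ℕ) :
    ∫ θ in (0:ℝ)..π,
      Complex.exp (((2 * (j : ℂ) - 2 * (k : ℂ)) * Complex.I) * θ)
      = if j = k then (π : ℂ) else 0 := by
  by_cases h : j = k
  · subst h
    simp
  · have hjk : (j : ℂ) ≠ (k : ℂ) := by exact_mod_cast h
    have hM : (2 * (j : ℂ) - 2 * (k : ℂ)) ≠ 0 := by
      intro h0; apply hjk; linear_combination h0 / 2
    have hc : (2 * (j : ℂ) - 2 * (k : ℂ)) * Complex.I ≠ 0 :=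
      mul_ne_zero hM Complex.I_ne_zero
    rw [int_exp _ hc, exp_even j k]
    simp [h]

private lemma hMne (j k : ℕ) : (2 * (j : ℂ) + 2 * (k : ℂ) + 1) ≠ 0 := by
  have h1 : ((2 * (j + k) + 1 : ℕ) : ℂ) ≠ 0 := Nat.cast_ne_zero.mpr (by omega)
  intro h; apply h1; push_cast; linear_combination h

private lemma core (s : Finset ℕ) (y : ℕ → ℝ) :
    ∑ j ∈ s, ∑ k ∈ s, y j * y k / ((j : ℝ) + (k : ℝ) + 1 / 2) ≤ π * ∑ k ∈ s, (y k) ^ 2 := by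
  set L : ℝ := ∑ j ∈ s, ∑ k ∈ s, y j * y k / ((j : ℝ) + (k : ℝ) + 1 / 2) with hL
  set g : ℝ → ℂ := fun θ => ∑ m ∈ s, (y m : ℂ) * Complex.exp ((2 * (m : ℂ) * Complex.I) * θ)
    with hg
  have pointwise1 : ∀ θ : ℝ, (g θ) ^ 2 * (-Complex.I * Complex.exp (Complex.I * θ))
      = ∑ j ∈ s, ∑ k ∈ s, ((y j * y k : ℝ) : ℂ) * (-Complex.I)
          * Complex.exp (((2 * (j : ℂ) + 2 * (k : ℂ) + 1) * Complex.I) * θ) := by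
    intro θ
    rw [hg, sq, Finset.sum_mul_sum, Finset.sum_mul]
    refine Finset.sum_congr rfl fun j _ => ?_
    rw [Finset.sum_mul]
    refine Finset.sum_congr rfl fun k _ => ?_
    rw [show ((2 * (j : ℂ) + 2 * (k : ℂ) + 1) * Complex.I) * (θ : ℂ)
        = (2 * (j : ℂ) * Complex.I) * θ + ((2 * (k : ℂ) * Complex.I) * θ + Complex.I * θ)
        by ring, Complex.exp_add, Complex.exp_add]
    push_cast
    ring
  have key1 : ((L : ℝ) : ℂ)
      = ∫ θ in (0:ℝ)..π, (g θ) ^ 2 * (-Complex.I * Complex.exp (Complex.I * θ)) := by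
    calc ((L : ℝ) : ℂ)
        = ∑ j ∈ s, ∑ k ∈ s, ((y j * y k : ℝ) : ℂ) * (-Complex.I)
            * (2 * Complex.I / (2 * (j : ℂ) + 2 * (k : ℂ) + 1)) := by
          rw [hL]
          push_cast
          refine Finset.sum_congr rfl fun j _ => Finset.sum_congr rfl fun k _ => ?_
          have hM := hMne j k
          have hM2 : ((j : ℂ) + (k : ℂ) + 1 / 2) ≠ 0 := by
            intro h; apply hM; linear_combination 2 * h
          have hsc : (-Complex.I) * (2 * Complex.I / (2 * (j : ℂ) + 2 * (k : ℂ) + 1))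
              = 1 / ((j : ℂ) + (k : ℂ) + 1 / 2) := by
            rw [mul_div_assoc']
            rw [show (-Complex.I) * (2 * Complex.I) = 2 by
              linear_combination (-2 : ℂ) * Complex.I_mul_I]
            rw [div_eq_div_iff hM hM2]; ring
          rw [mul_assoc, hsc, mul_one_div]
      _ = ∑ j ∈ s, ∑ k ∈ s, ∫ θ in (0:ℝ)..π, ((y j * y k : ℝ) : ℂ) * (-Complex.I)
            * Complex.exp (((2 * (j : ℂ) + 2 * (k : ℂ) + 1) * Complex.I) * θ) := by
          refine Finset.sum_congr rfl fun j _ => Finset.sum_congr rfl fun k _ => ?_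
          rw [intervalIntegral.integral_const_mul, int_odd]
      _ = ∫ θ in (0:ℝ)..π, ∑ j ∈ s, ∑ k ∈ s, ((y j * y k : ℝ) : ℂ) * (-Complex.I)
            * Complex.exp (((2 * (j : ℂ) + 2 * (k : ℂ) + 1) * Complex.I) * θ) := by
          rw [intervalIntegral.integral_finset_sum (f := fun j θ => ∑ k ∈ s,
            ((y j * y k : ℝ) : ℂ) * (-Complex.I)
              * Complex.exp (((2 * (j : ℂ) + 2 * (k : ℂ) + 1) * Complex.I) * θ))
            (fun j _ => (continuous_finset_sum _ fun k _ =>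
              continuous_const.mul (contExp _)).intervalIntegrable _ _)]
          exact Finset.sum_congr rfl fun j _ =>
            (intervalIntegral.integral_finset_sum fun k _ =>
              (continuous_const.mul (contExp _)).intervalIntegrable _ _).symm
      _ = _ := intervalIntegral.integral_congr fun θ _ => (pointwise1 θ).symm
  have pointwise2 : ∀ θ : ℝ, ((‖g θ‖ ^ 2 : ℝ) : ℂ)
      = ∑ j ∈ s, ∑ k ∈ s, ((y j * y k : ℝ) : ℂ)
          * Complex.exp (((2 * (j : ℂ) - 2 * (k : ℂ)) * Complex.I) * θ) := by
    intro θ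
    have h0 : ((‖g θ‖ ^ 2 : ℝ) : ℂ) = g θ * (starRingEnd ℂ) (g θ) := by
      rw [Complex.mul_conj]
      norm_cast
      rw [Complex.sq_norm]
    have hconj : (starRingEnd ℂ) (g θ)
        = ∑ k ∈ s, (y k : ℂ) * Complex.exp ((-(2 * (k : ℂ) * Complex.I)) * θ) := by
      rw [hg, map_sum]
      refine Finset.sum_congr rfl fun k _ => ?_
      rw [map_mul, Complex.conj_ofReal, ← Complex.exp_conj]
      congr 1
      rw [show (starRingEnd ℂ) (2 * (k : ℂ) * Complex.I * (θ : ℂ))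
          = (-(2 * (k : ℂ) * Complex.I)) * (θ : ℂ) by
        simp [map_mul, Complex.conj_I, Complex.conj_ofReal, map_ofNat, map_natCast]]
    rw [h0, hconj, hg, Finset.sum_mul_sum]
    refine Finset.sum_congr rfl fun j _ => Finset.sum_congr rfl fun k _ => ?_
    rw [show ((2 * (j : ℂ) - 2 * (k : ℂ)) * Complex.I) * (θ : ℂ)
        = (2 * (j : ℂ) * Complex.I) * θ + (-(2 * (k : ℂ) * Complex.I)) * θ by ring,
      Complex.exp_add]
    push_cast
    ring
  have key2 : (∫ θ in (0:ℝ)..π, ‖g θ‖ ^ 2) = π * ∑ k ∈ s, (y k) ^ 2 := by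
    have h1 : ((∫ θ in (0:ℝ)..π, ‖g θ‖ ^ 2 : ℝ) : ℂ) = ((π * ∑ k ∈ s, (y k) ^ 2 : ℝ) : ℂ) := by
      rw [← intervalIntegral.integral_ofReal]
      calc (∫ θ in (0:ℝ)..π, ((‖g θ‖ ^ 2 : ℝ) : ℂ))
          = ∫ θ in (0:ℝ)..π, ∑ j ∈ s, ∑ k ∈ s, ((y j * y k : ℝ) : ℂ)
              * Complex.exp (((2 * (j : ℂ) - 2 * (k : ℂ)) * Complex.I) * θ) :=
            intervalIntegral.integral_congr fun θ _ => pointwise2 θ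
        _ = ∑ j ∈ s, ∑ k ∈ s, ∫ θ in (0:ℝ)..π, ((y j * y k : ℝ) : ℂ)
              * Complex.exp (((2 * (j : ℂ) - 2 * (k : ℂ)) * Complex.I) * θ) := by
            rw [intervalIntegral.integral_finset_sum (f := fun j θ => ∑ k ∈ s,
              ((y j * y k : ℝ) : ℂ) * Complex.exp (((2 * (j : ℂ) - 2 * (k : ℂ)) * Complex.I) * θ))
              (fun j _ => (continuous_finset_sum _ fun k _ =>
                continuous_const.mul (contExp _)).intervalIntegrable _ _)]
            exact Finset.sum_congr rfl fun j _ =>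
              (intervalIntegral.integral_finset_sum fun k _ =>
                (continuous_const.mul (contExp _)).intervalIntegrable _ _)
        _ = ∑ j ∈ s, ∑ k ∈ s, ((y j * y k : ℝ) : ℂ) * (if j = k then (π : ℂ) else 0) := by
            refine Finset.sum_congr rfl fun j _ => Finset.sum_congr rfl fun k _ => ?_
            rw [intervalIntegral.integral_const_mul, int_diff]
        _ = ((π * ∑ k ∈ s, (y k) ^ 2 : ℝ) : ℂ) := by
            push_cast
            rw [Finset.mul_sum]
            refine Finset.sum_congr rfl fun j hj => ?_
            simp only [mul_ite, mul_zero]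
            rw [Finset.sum_ite_eq s j fun k => ((y j : ℂ)) * (y k) * π]
            simp [hj]
            ring
    exact_mod_cast h1
  have hnorm : ∀ θ : ℝ, ‖(g θ) ^ 2 * (-Complex.I * Complex.exp (Complex.I * θ))‖
      = ‖g θ‖ ^ 2 := by
    intro θ
    rw [norm_mul, norm_pow]
    have : ‖-Complex.I * Complex.exp (Complex.I * θ)‖ = 1 := by
      rw [norm_mul, norm_neg, Complex.norm_I]
      rw [Complex.norm_exp]
      simp
    rw [this, mul_one]
  calc L ≤ |L| := le_abs_self L
    _ = ‖((L : ℝ) : ℂ)‖ := by simp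
    _ = ‖∫ θ in (0:ℝ)..π, (g θ) ^ 2 * (-Complex.I * Complex.exp (Complex.I * θ))‖ := by
        rw [key1]
    _ ≤ ∫ θ in (0:ℝ)..π, ‖(g θ) ^ 2 * (-Complex.I * Complex.exp (Complex.I * θ))‖ :=
        intervalIntegral.norm_integral_le_integral_norm pi_pos.le
    _ = ∫ θ in (0:ℝ)..π, ‖g θ‖ ^ 2 := intervalIntegral.integral_congr fun θ _ => hnorm θ
    _ = π * ∑ k ∈ s, (y k) ^ 2 := key2

theorem ingham_inequality_large (x : ℕ → ℝ) (hx : Summable fun k => (x k) ^ 2)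
    (a : ℝ) (ha : 1 / 2 < a) :
    ∑' i : ℕ, ∑' j : ℕ, |x i| * |x j| / ((i : ℝ) + (j : ℝ) + a) ≤
      π * ∑' k : ℕ, (x k) ^ 2 := by
  have ha0 : (0 : ℝ) < a := lt_trans (by norm_num) ha
  set f : ℕ × ℕ → ℝ := fun p => |x p.1| * |x p.2| / ((p.1 : ℝ) + (p.2 : ℝ) + a) with hfdef
  have hf0 : ∀ p, 0 ≤ f p := fun p =>
    div_nonneg (mul_nonneg (abs_nonneg _) (abs_nonneg _)) (by positivity)
  have hbound : ∀ u : Finset (ℕ × ℕ), ∑ p ∈ u, f p ≤ π * ∑' k, (x k) ^ 2 := by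
    intro u
    set s : Finset ℕ := u.image Prod.fst ∪ u.image Prod.snd with hs
    have husub : u ⊆ s ×ˢ s := by
      intro p hp
      rw [Finset.mem_product]
      exact ⟨Finset.mem_union_left _ (Finset.mem_image_of_mem _ hp),
        Finset.mem_union_right _ (Finset.mem_image_of_mem _ hp)⟩
    calc ∑ p ∈ u, f p ≤ ∑ p ∈ s ×ˢ s, f p :=
          Finset.sum_le_sum_of_subset_of_nonneg husub fun p _ _ => hf0 p
      _ = ∑ j ∈ s, ∑ k ∈ s, |x j| * |x k| / ((j : ℝ) + (k : ℝ) + a) := by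
          rw [Finset.sum_product]
      _ ≤ ∑ j ∈ s, ∑ k ∈ s, |x j| * |x k| / ((j : ℝ) + (k : ℝ) + 1 / 2) := by
          refine Finset.sum_le_sum fun j _ => Finset.sum_le_sum fun k _ => ?_
          exact div_le_div_of_nonneg_left (mul_nonneg (abs_nonneg _) (abs_nonneg _))
            (by positivity) (by linarith)
      _ ≤ π * ∑ k ∈ s, (x k) ^ 2 := by
          have h := core s fun k => |x k|
          simpa [sq_abs] using h
      _ ≤ π * ∑' k, (x k) ^ 2 := by
          refine mul_le_mul_of_nonneg_left ?_ pi_pos.le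
          exact Summable.sum_le_tsum s (fun k _ => sq_nonneg _) hx
  have hsf : Summable f := summable_of_sum_le (fun p => hf0 p) hbound
  have hrw : ∑' i : ℕ, ∑' j : ℕ, |x i| * |x j| / ((i : ℝ) + (j : ℝ) + a)
      = ∑' p : ℕ × ℕ, f p := (Summable.tsum_prod' hsf hsf.prod_factor).symm
  rw [hrw]
  exact Summable.tsum_le_of_sum_le hsf hbound
end

section
/- For any real sequence x = (x_0, x_1, ...) in l^2 and any a with 0 < a ≤ 1/2, the double sum over i,j ≥ 0 of |x_i||x_j|/(i+j+a) is at most (π/sin(aπ))·(sum of x_k^2). -/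
open Real Finset MeasureTheory intervalIntegral



noncomputable def inghamP (a : ℝ) (n : ℕ) : ℝ := Real.Gamma (n + a) / n.factorial

lemma inghamP_pos {a : ℝ} (ha0 : 0 < a) (n : ℕ) : 0 < inghamP a n :=
  div_pos (Real.Gamma_pos_of_pos (by positivity)) (by exact_mod_cast n.factorial_pos)

lemma inghamP_zero (a : ℝ) : inghamP a 0 = Real.Gamma a := by
  simp [inghamP]

lemma inghamP_rec {a : ℝ} (ha0 : 0 < a) (n : ℕ) :
    ((n : ℝ) + 1) * inghamP a (n + 1) = ((n : ℝ) + a) * inghamP a n := by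
  have h1 : ((n + 1 : ℕ) : ℝ) + a = ((n : ℝ) + a) + 1 := by push_cast; ring
  have h2 : Real.Gamma (((n : ℝ) + a) + 1) = ((n : ℝ) + a) * Real.Gamma (n + a) :=
    Real.Gamma_add_one (by positivity)
  have h3 : ((n + 1).factorial : ℝ) = ((n : ℝ) + 1) * n.factorial := by
    rw [Nat.factorial_succ]; push_cast; ring
  have hf : (n.factorial : ℝ) ≠ 0 := by exact_mod_cast n.factorial_pos.ne'
  rw [inghamP, inghamP, h1, h2, h3]
  field_simp





lemma ingham_key_identity {a : ℝ} (ha0 : 0 < a) (N : ℕ) (u : ℝ) :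
    (1 - u) * (∑ n ∈ range N, inghamP a n * (n * u ^ (n - 1))) -
      a * ∑ n ∈ range N, inghamP a n * u ^ n
      = -((N : ℝ) * inghamP a N * u ^ (N - 1)) := by
  induction N with
  | zero => simp
  | succ N ih =>
    rw [Finset.sum_range_succ, Finset.sum_range_succ]
    have hrec := inghamP_rec ha0 N
    have hpow : (N : ℝ) * u ^ (N - 1) * u = (N : ℝ) * u ^ N := by
      cases N with
      | zero => simp
      | succ k => simp only [Nat.add_sub_cancel]; ring
    have : (1 - u) * (∑ n ∈ range N, inghamP a n * (n * u ^ (n - 1))) -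
        a * ∑ n ∈ range N, inghamP a n * u ^ n = -((N : ℝ) * inghamP a N * u ^ (N - 1)) := ih
    simp only [Nat.add_sub_cancel]
    push_cast
    linear_combination this - inghamP a N * hpow + u ^ N * hrec

lemma ingham_partial_sum_le {a : ℝ} (ha0 : 0 < a) {t : ℝ} (ht0 : 0 ≤ t) (ht1 : t < 1) (N : ℕ) :
    ∑ n ∈ range N, inghamP a n * t ^ n ≤ Real.Gamma a * (1 - t) ^ (-a) := by
  set s : ℝ → ℝ := fun u => ∑ n ∈ range N, inghamP a n * u ^ n with hs
  set F : ℝ → ℝ := fun u => (1 - u) ^ a * s u with hF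
  -- derivative facts
  have hderiv : ∀ u ∈ Set.Ioo (0 : ℝ) 1, HasDerivAt F
      (-((1 - u) ^ (a - 1) * ((N : ℝ) * inghamP a N * u ^ (N - 1)))) u := by
    intro u hu
    have h1u : (0 : ℝ) < 1 - u := by linarith [hu.2]
    have hds : HasDerivAt s (∑ n ∈ range N, inghamP a n * ((n : ℝ) * u ^ (n - 1))) u := by
      apply HasDerivAt.fun_sum
      intro n _
      exact HasDerivAt.const_mul (inghamP a n) (hasDerivAt_pow n u)
    have hb : HasDerivAt (fun u : ℝ => 1 - u) (-1) u := by
      simpa using (hasDerivAt_id u).const_sub 1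
    have hdr : HasDerivAt (fun u : ℝ => (1 - u) ^ a)
        ((a * (1 - u) ^ (a - 1)) * (-1)) u :=
      (Real.hasDerivAt_rpow_const (Or.inl h1u.ne')).comp u hb
    have hmul : HasDerivAt F _ u := hdr.mul hds
    convert hmul using 1
    have hkey := ingham_key_identity ha0 N u
    have hsplit : (1 - u) ^ a = (1 - u) ^ (a - 1) * (1 - u) := by
      rw [← Real.rpow_add_one h1u.ne' (a - 1)]; ring_nf
    rw [hsplit]
    set S1 := ∑ n ∈ range N, inghamP a n * ((n : ℝ) * u ^ (n - 1)) with hS1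
    have hsu : s u = ∑ n ∈ range N, inghamP a n * u ^ n := rfl
    set S2 := ∑ n ∈ range N, inghamP a n * u ^ n with hS2
    rw [hsu]
    linear_combination (-(1 - u) ^ (a - 1)) * hkey
  have hdiff : ∀ u ∈ Set.Ioo (0 : ℝ) t, DifferentiableAt ℝ F u := by
    intro u hu
    exact (hderiv u ⟨hu.1, lt_of_lt_of_le hu.2 ht1.le⟩).differentiableAt
  have hcont : ContinuousOn F (Set.Icc 0 t) := by
    apply ContinuousOn.mul
    · apply ContinuousOn.rpow_const
      · exact (continuous_const.sub continuous_id).continuousOn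
      · intro u hu
        left
        have h2 := hu.2
        have : t < 1 := ht1
        intro h; nlinarith
    · exact continuousOn_finset_sum _ fun n _ => Continuous.continuousOn (by continuity)
  have hanti : AntitoneOn F (Set.Icc 0 t) := by
    apply antitoneOn_of_deriv_nonpos (convex_Icc 0 t) hcont
    · intro u hu
      rw [interior_Icc] at hu
      exact (hdiff u hu).differentiableWithinAt
    · intro u hu
      rw [interior_Icc] at hu
      have hu' : u ∈ Set.Ioo (0 : ℝ) 1 := ⟨hu.1, lt_of_lt_of_le hu.2 ht1.le⟩
      rw [(hderiv u hu').deriv]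
      have h1u : (0 : ℝ) < 1 - u := by linarith [hu'.2]
      have hnn : (0:ℝ) ≤ (1 - u) ^ (a - 1) * ((N : ℝ) * inghamP a N * u ^ (N - 1)) := by
        have hp := (inghamP_pos ha0 N).le
        have hu0 := hu.1.le
        positivity
      linarith
  have hF0 : F 0 ≤ Real.Gamma a := by
    show (1 - (0:ℝ)) ^ a * s 0 ≤ Real.Gamma a
    rw [sub_zero, Real.one_rpow, one_mul]
    show ∑ n ∈ range N, inghamP a n * (0:ℝ) ^ n ≤ Real.Gamma a
    rcases Nat.eq_zero_or_pos N with h | h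
    · simp [h, (Real.Gamma_pos_of_pos ha0).le]
    · rw [Finset.sum_eq_single 0]
      · simp [inghamP_zero]
      · intro n _ hn; simp [zero_pow hn]
      · intro h'; exact absurd (Finset.mem_range.mpr h) h'
  have hFt : F t ≤ Real.Gamma a := by
    have := hanti (Set.left_mem_Icc.mpr ht0) (Set.right_mem_Icc.mpr ht0) ht0
    exact this.trans hF0
  -- conclude
  have h1t : (0 : ℝ) < 1 - t := by linarith
  have hpos : (0 : ℝ) < (1 - t) ^ a := Real.rpow_pos_of_pos h1t a
  rw [Real.rpow_neg h1t.le]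
  have hgoal : s t ≤ Real.Gamma a * ((1 - t) ^ a)⁻¹ := by
    rw [← div_eq_mul_inv, le_div_iff₀ hpos, mul_comm]
    exact hFt
  exact hgoal



lemma lintegral_rpow_Ioo {c : ℝ} (hc : -1 < c) :
    ∫⁻ t in Set.Ioo (0:ℝ) 1, ENNReal.ofReal (t ^ c) = ENNReal.ofReal (1/(c+1)) := by
  have hii : IntervalIntegrable (fun t : ℝ => t ^ c) volume 0 1 := intervalIntegrable_rpow' hc
  have hIoc : IntegrableOn (fun t : ℝ => t ^ c) (Set.Ioc 0 1) := by
    rwa [intervalIntegrable_iff_integrableOn_Ioc_of_le zero_le_one] at hii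
  have hIoo : IntegrableOn (fun t : ℝ => t ^ c) (Set.Ioo 0 1) :=
    hIoc.mono_set Set.Ioo_subset_Ioc_self
  rw [← ofReal_integral_eq_lintegral_ofReal hIoo]
  · congr 1
    rw [← integral_Ioc_eq_integral_Ioo]
    have : ∫ t in Set.Ioc (0:ℝ) 1, t ^ c = ∫ t in (0:ℝ)..1, t ^ c := by
      rw [integral_of_le zero_le_one]
    rw [this, integral_rpow (Or.inl hc)]
    rw [Real.one_rpow, Real.zero_rpow (by linarith)]
    ring
  · filter_upwards [ae_restrict_mem measurableSet_Ioo] with t ht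
    exact Real.rpow_nonneg ht.1.le c



section Beta
variable {a : ℝ} (ha0 : 0 < a) (ha1 : a < 1) (m : ℕ)

private lemma ingham_eqon :
    ∀ x ∈ Set.Icc (0:ℝ) 1, ((x : ℂ) ^ ((((m : ℝ) + a : ℝ) : ℂ) - 1) *
        (1 - (x : ℂ)) ^ ((((1 - a : ℝ)) : ℂ) - 1))
      = ((x ^ ((m : ℝ) + a - 1) * (1 - x) ^ (-a) : ℝ) : ℂ) := by
  intro x hx
  rw [Complex.ofReal_mul, Complex.ofReal_cpow hx.1, Complex.ofReal_cpow (by linarith [hx.2])]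
  norm_cast
  push_cast
  ring_nf

include ha0 ha1 in
lemma ingham_beta_intervalIntegrable :
    IntervalIntegrable (fun x : ℝ => x ^ ((m : ℝ) + a - 1) * (1 - x) ^ (-a)) volume 0 1 := by
  have hu : 0 < Complex.re (((m : ℝ) + a : ℝ) : ℂ) := by
    simp only [Complex.ofReal_re]; positivity
  have hv : 0 < Complex.re (((1 - a : ℝ)) : ℂ) := by
    simp only [Complex.ofReal_re]; linarith
  have hbc := Complex.betaIntegral_convergent hu hv
  have heq : ∀ x ∈ Set.Icc (0:ℝ) 1, _ := ingham_eqon (a := a) m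
  have hbc2 : IntervalIntegrable
      (fun x : ℝ => ((x ^ ((m : ℝ) + a - 1) * (1 - x) ^ (-a) : ℝ) : ℂ)) volume 0 1 := by
    apply hbc.congr
    have : Set.uIoc (0:ℝ) 1 = Set.Ioc 0 1 := Set.uIoc_of_le zero_le_one
    rw [this]
    intro x hx
    exact ingham_eqon m x ⟨hx.1.le, hx.2⟩
  rw [intervalIntegrable_iff_integrableOn_Ioc_of_le zero_le_one] at hbc2 ⊢
  have := hbc2.re
  simpa [IntegrableOn] using this


include ha0 ha1 in
lemma ingham_beta_value :
    ∫ t in Set.Ioo (0:ℝ) 1, t ^ ((m:ℝ) + a - 1) * (1 - t) ^ (-a)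
      = Real.Gamma ((m:ℝ) + a) * Real.Gamma (1 - a) / m.factorial := by
  have hu : 0 < Complex.re (((m : ℝ) + a : ℝ) : ℂ) := by
    simp only [Complex.ofReal_re]; positivity
  have hv : 0 < Complex.re (((1 - a : ℝ)) : ℂ) := by
    simp only [Complex.ofReal_re]; linarith
  have hbeta := Complex.Gamma_mul_Gamma_eq_betaIntegral hu hv
  have h1 : Complex.betaIntegral (((m:ℝ) + a : ℝ) : ℂ) ((1 - a : ℝ) : ℂ)
      = ((∫ t in (0:ℝ)..1, t ^ ((m:ℝ) + a - 1) * (1 - t) ^ (-a) : ℝ) : ℂ) := by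
    rw [Complex.betaIntegral, ← intervalIntegral.integral_ofReal]
    apply intervalIntegral.integral_congr
    intro x hx
    rw [Set.uIcc_of_le zero_le_one] at hx
    exact ingham_eqon m x hx
  have h2 : ((((m:ℝ) + a : ℝ)) : ℂ) + (((1 - a : ℝ)) : ℂ) = (((m : ℝ) + 1 : ℝ) : ℂ) := by
    push_cast; ring
  rw [h1, h2, Complex.Gamma_ofReal, Complex.Gamma_ofReal, Complex.Gamma_ofReal] at hbeta
  have h3 : Real.Gamma ((m:ℝ) + 1) = (m.factorial : ℝ) := Real.Gamma_nat_eq_factorial m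
  rw [h3] at hbeta
  have h4 : Real.Gamma ((m:ℝ) + a) * Real.Gamma (1 - a) / (m.factorial : ℝ)
      = ∫ t in (0:ℝ)..1, t ^ ((m:ℝ) + a - 1) * (1 - t) ^ (-a) := by
    have h5 : Real.Gamma ((m:ℝ) + a) * Real.Gamma (1 - a)
        = (m.factorial : ℝ) * ∫ t in (0:ℝ)..1, t ^ ((m:ℝ) + a - 1) * (1 - t) ^ (-a) := by
      exact_mod_cast hbeta
    rw [div_eq_iff (by exact_mod_cast m.factorial_pos.ne')]
    linear_combination h5
  rw [← integral_Ioc_eq_integral_Ioo, h4, intervalIntegral.integral_of_le zero_le_one]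

end Beta





lemma ingham_tsum_pow_le {a : ℝ} (ha0 : 0 < a) {t : ℝ} (ht0 : 0 < t) (ht1 : t < 1) :
    ∑' n : ℕ, ENNReal.ofReal (inghamP a n * t ^ n)
      ≤ ENNReal.ofReal (Real.Gamma a * (1 - t) ^ (-a)) := by
  rw [ENNReal.tsum_eq_iSup_sum]
  apply iSup_le
  intro s
  obtain ⟨N, hN⟩ := s.exists_nat_subset_range
  have h1 : ∑ n ∈ s, ENNReal.ofReal (inghamP a n * t ^ n)
      = ENNReal.ofReal (∑ n ∈ s, inghamP a n * t ^ n) := by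
    rw [ENNReal.ofReal_sum_of_nonneg]
    intro n _
    exact mul_nonneg (inghamP_pos ha0 n).le (by positivity)
  rw [h1]
  apply ENNReal.ofReal_le_ofReal
  calc ∑ n ∈ s, inghamP a n * t ^ n ≤ ∑ n ∈ range N, inghamP a n * t ^ n := by
        apply Finset.sum_le_sum_of_subset_of_nonneg hN
        intro n _ _
        exact mul_nonneg (inghamP_pos ha0 n).le (by positivity)
    _ ≤ _ := ingham_partial_sum_le ha0 ht0.le ht1 N

lemma ingham_row {a : ℝ} (ha0 : 0 < a) (ha : a ≤ 1/2) (m : ℕ) :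
    ∑' n : ℕ, ENNReal.ofReal (inghamP a n / ((m:ℝ) + n + a))
      ≤ ENNReal.ofReal (π / Real.sin (π * a) * inghamP a m) := by
  have ha1 : a < 1 := lt_of_le_of_lt ha (by norm_num)
  set μ := volume.restrict (Set.Ioo (0:ℝ) 1) with hμ
  -- Step 1: rewrite each term as an integral
  have hterm : ∀ n : ℕ, ENNReal.ofReal (inghamP a n / ((m:ℝ) + n + a))
      = ∫⁻ t in Set.Ioo (0:ℝ) 1, ENNReal.ofReal (inghamP a n * t ^ ((m:ℝ) + n + a - 1)) := by
    intro n
    have hc : (-1 : ℝ) < (m:ℝ) + n + a - 1 := by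
      have : (0:ℝ) ≤ (m:ℝ) + n := by positivity
      linarith
    have h2 : ∀ t : ℝ, ENNReal.ofReal (inghamP a n * t ^ ((m:ℝ) + n + a - 1))
        = ENNReal.ofReal (inghamP a n) * ENNReal.ofReal (t ^ ((m:ℝ) + n + a - 1)) := by
      intro t
      exact ENNReal.ofReal_mul (inghamP_pos ha0 n).le
    simp_rw [h2]
    rw [lintegral_const_mul' _ _ ENNReal.ofReal_ne_top, lintegral_rpow_Ioo hc,
      ← ENNReal.ofReal_mul (inghamP_pos ha0 n).le]
    congr 1
    have : (m:ℝ) + n + a - 1 + 1 = (m:ℝ) + n + a := by ring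
    rw [this, div_eq_mul_one_div]
  simp_rw [hterm]
  -- Step 2: swap sum and integral
  rw [← lintegral_tsum]
  swap
  · intro n
    have hcont : ContinuousOn
        (fun t : ℝ => ENNReal.ofReal (inghamP a n * t ^ ((m:ℝ) + n + a - 1)))
        (Set.Ioo (0:ℝ) 1) := by
      apply ENNReal.continuous_ofReal.comp_continuousOn
      exact continuousOn_const.mul
        (continuousOn_id.rpow_const fun x hx => Or.inl (ne_of_gt hx.1))
    exact hcont.aemeasurable measurableSet_Ioo
  -- Step 3: bound the integrand pointwise
  have hmono : ∫⁻ t in Set.Ioo (0:ℝ) 1,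
        (∑' n : ℕ, ENNReal.ofReal (inghamP a n * t ^ ((m:ℝ) + n + a - 1)))
      ≤ ∫⁻ t in Set.Ioo (0:ℝ) 1,
        ENNReal.ofReal (Real.Gamma a) * ENNReal.ofReal (t ^ ((m:ℝ) + a - 1) * (1 - t) ^ (-a)) := by
    apply lintegral_mono_ae
    filter_upwards [ae_restrict_mem measurableSet_Ioo] with t ht
    have ht0 := ht.1
    have ht1 := ht.2
    have hsplit : ∀ n : ℕ, t ^ ((m:ℝ) + n + a - 1) = t ^ ((m:ℝ) + a - 1) * t ^ n := by
      intro n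
      rw [← Real.rpow_natCast t n, ← Real.rpow_add ht0]
      ring_nf
    have h3 : ∀ n : ℕ, ENNReal.ofReal (inghamP a n * t ^ ((m:ℝ) + n + a - 1))
        = ENNReal.ofReal (t ^ ((m:ℝ) + a - 1)) * ENNReal.ofReal (inghamP a n * t ^ n) := by
      intro n
      rw [← ENNReal.ofReal_mul (by positivity)]
      congr 1
      rw [hsplit n]; ring
    simp_rw [h3]
    rw [ENNReal.tsum_mul_left]
    calc ENNReal.ofReal (t ^ ((m:ℝ) + a - 1)) * ∑' n : ℕ, ENNReal.ofReal (inghamP a n * t ^ n)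
        ≤ ENNReal.ofReal (t ^ ((m:ℝ) + a - 1)) * ENNReal.ofReal (Real.Gamma a * (1 - t) ^ (-a)) := by
          gcongr
          exact ingham_tsum_pow_le ha0 ht0 ht1
      _ = ENNReal.ofReal (Real.Gamma a) * ENNReal.ofReal (t ^ ((m:ℝ) + a - 1) * (1 - t) ^ (-a)) := by
          rw [← ENNReal.ofReal_mul (by positivity), ← ENNReal.ofReal_mul (Real.Gamma_pos_of_pos ha0).le]
          congr 1
          ring
  refine hmono.trans ?_
  -- Step 4: evaluate the beta integral
  rw [lintegral_const_mul' _ _ ENNReal.ofReal_ne_top]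
  have hint : IntegrableOn (fun t : ℝ => t ^ ((m:ℝ) + a - 1) * (1 - t) ^ (-a)) (Set.Ioo 0 1) := by
    have := (intervalIntegrable_iff_integrableOn_Ioc_of_le zero_le_one).mp
      (ingham_beta_intervalIntegrable ha0 ha1 m)
    exact this.mono_set Set.Ioo_subset_Ioc_self
  rw [← ofReal_integral_eq_lintegral_ofReal hint]
  swap
  · filter_upwards [ae_restrict_mem measurableSet_Ioo] with t ht
    have h1 : (0:ℝ) < 1 - t := by linarith [ht.2]
    have h0 : (0:ℝ) < t := ht.1
    positivity
  rw [ingham_beta_value ha0 ha1 m, ← ENNReal.ofReal_mul (Real.Gamma_pos_of_pos ha0).le]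
  apply ENNReal.ofReal_le_ofReal
  rw [← Real.Gamma_mul_Gamma_one_sub a]
  unfold inghamP
  apply le_of_eq
  field_simp





theorem ingham_inequality_small (x : ℕ → ℝ) (hx : Summable fun k => (x k) ^ 2)
    (a : ℝ) (ha0 : 0 < a) (ha : a ≤ 1 / 2) :
    ∑' i : ℕ, ∑' j : ℕ, |x i| * |x j| / ((i : ℝ) + (j : ℝ) + a) ≤
      π / Real.sin (a * π) * ∑' k : ℕ, (x k) ^ 2 := by
  have hsin : 0 < Real.sin (a * π) := by
    apply Real.sin_pos_of_pos_of_lt_pi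
    · positivity
    · nlinarith [Real.pi_pos]
  set lam : ℝ := π / Real.sin (a * π) with hlam
  have hlam0 : 0 ≤ lam := div_nonneg Real.pi_pos.le hsin.le
  set p : ℕ → ℝ := inghamP a with hp
  have hppos : ∀ n, 0 < p n := inghamP_pos ha0
  set S : ℝ := ∑' k : ℕ, (x k) ^ 2 with hS
  have hS0 : 0 ≤ S := tsum_nonneg fun k => sq_nonneg _
  have hd : ∀ i j : ℕ, (0:ℝ) < (i:ℝ) + (j:ℝ) + a := by
    intro i j; positivity
  have hnnT : ∀ i j : ℕ, 0 ≤ (x i)^2 * (p j / p i) / (2 * ((i:ℝ) + (j:ℝ) + a)) := by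
    intro i j
    exact div_nonneg (mul_nonneg (sq_nonneg _) (div_pos (hppos j) (hppos i)).le)
      (by nlinarith [hd i j])
  set G : ℕ → ℕ → ENNReal := fun i j => ENNReal.ofReal (|x i| * |x j| / ((i:ℝ) + (j:ℝ) + a))
    with hG
  set T : ℕ → ℕ → ENNReal :=
    fun i j => ENNReal.ofReal ((x i)^2 * (p j / p i) / (2 * ((i:ℝ) + (j:ℝ) + a))) with hT
  -- pointwise AM-GM bound
  have hAM : ∀ i j, G i j ≤ T i j + T j i := by
    intro i j
    have hc : 0 < p j / p i := div_pos (hppos j) (hppos i)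
    have hcinv : (p j / p i)⁻¹ = p i / p j := by rw [inv_div]
    set u := |x i| with hu
    set v := |x j| with hv
    have hu2 : u ^ 2 = (x i) ^ 2 := sq_abs (x i)
    have hv2 : v ^ 2 = (x j) ^ 2 := sq_abs (x j)
    have h2 : 2 * (u * v) ≤ u^2 * (p j / p i) + v^2 * (p j / p i)⁻¹ := by
      set c := p j / p i with hcdef
      have h1 : c * c⁻¹ = 1 := mul_inv_cancel₀ hc.ne'
      have hkey : 2 * (u * v) * c ≤ (u^2 * c + v^2 * c⁻¹) * c := by
        nlinarith [sq_nonneg (u * c - v)]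
      exact le_of_mul_le_mul_right hkey hc
    have hdij := hd i j
    have hTji : T j i = ENNReal.ofReal ((x j)^2 * (p i / p j) / (2 * ((i:ℝ) + (j:ℝ) + a))) := by
      rw [hT]
      congr 2
      ring_nf
    rw [hG, hTji, hT]
    rw [← ENNReal.ofReal_add (hnnT i j) (by
      exact div_nonneg (mul_nonneg (sq_nonneg _) (div_pos (hppos i) (hppos j)).le)
        (by nlinarith [hd i j]))]
    apply ENNReal.ofReal_le_ofReal
    rw [← add_div, div_le_div_iff₀ hdij (by nlinarith [hd i j])]
    rw [← hcinv, ← hu2, ← hv2]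
    nlinarith [mul_le_mul_of_nonneg_right h2 hdij.le]
  -- row bound for T
  have hrowT : ∀ i, ∑' j, T i j ≤ ENNReal.ofReal ((x i)^2 * lam / 2) := by
    intro i
    have hterm : ∀ j, T i j
        = ENNReal.ofReal ((x i)^2 / (2 * p i)) * ENNReal.ofReal (p j / ((i:ℝ) + j + a)) := by
      intro j
      rw [hT, ← ENNReal.ofReal_mul (div_nonneg (sq_nonneg _) (by nlinarith [hppos i]))]
      congr 1
      have h1 : p i ≠ 0 := (hppos i).ne'
      have h2 : (i:ℝ) + j + a ≠ 0 := (hd i j).ne'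
      field_simp
    simp_rw [hterm]
    rw [ENNReal.tsum_mul_left]
    calc ENNReal.ofReal ((x i)^2 / (2 * p i)) * ∑' j, ENNReal.ofReal (p j / ((i:ℝ) + j + a))
        ≤ ENNReal.ofReal ((x i)^2 / (2 * p i)) * ENNReal.ofReal (π / Real.sin (π * a) * p i) := by
          gcongr
          exact ingham_row ha0 ha i
      _ = ENNReal.ofReal ((x i)^2 * lam / 2) := by
          rw [← ENNReal.ofReal_mul (div_nonneg (sq_nonneg _) (by nlinarith [hppos i]))]
          congr 1
          have h1 : p i ≠ 0 := (hppos i).ne'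
          rw [hlam, mul_comm π a]
          field_simp
  -- sum everything
  have hsum1 : ∑' i, ∑' j, T i j ≤ ENNReal.ofReal (lam / 2 * S) := by
    calc ∑' i, ∑' j, T i j ≤ ∑' i, ENNReal.ofReal ((x i)^2 * lam / 2) :=
          ENNReal.tsum_le_tsum hrowT
      _ = ∑' i, ENNReal.ofReal (lam / 2) * ENNReal.ofReal ((x i)^2) := by
          congr 1; funext i
          rw [← ENNReal.ofReal_mul (by positivity)]
          congr 1; ring
      _ = ENNReal.ofReal (lam / 2) * ∑' i, ENNReal.ofReal ((x i)^2) := ENNReal.tsum_mul_left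
      _ = ENNReal.ofReal (lam / 2) * ENNReal.ofReal S := by
          congr 1
          rw [hS, ENNReal.ofReal_tsum_of_nonneg (fun k => sq_nonneg _) hx]
      _ = ENNReal.ofReal (lam / 2 * S) := by
          rw [← ENNReal.ofReal_mul (by positivity)]
  have hswap : ∑' i, ∑' j, T j i = ∑' i, ∑' j, T i j := ENNReal.tsum_comm
  have hE : ∑' i, ∑' j, G i j ≤ ENNReal.ofReal (lam * S) := by
    calc ∑' i, ∑' j, G i j ≤ ∑' i, ∑' j, (T i j + T j i) :=
          ENNReal.tsum_le_tsum fun i => ENNReal.tsum_le_tsum fun j => hAM i j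
      _ = (∑' i, ∑' j, T i j) + ∑' i, ∑' j, T j i := by
          simp_rw [ENNReal.tsum_add]
      _ ≤ ENNReal.ofReal (lam / 2 * S) + ENNReal.ofReal (lam / 2 * S) := by
          rw [hswap]
          exact add_le_add hsum1 hsum1
      _ = ENNReal.ofReal (lam * S) := by
          rw [← ENNReal.ofReal_add (by positivity) (by positivity)]
          congr 1; ring
  -- convert back to real numbers
  have hfin : ∑' i, ∑' j, G i j ≠ ⊤ :=
    (lt_of_le_of_lt hE ENNReal.ofReal_lt_top).ne
  have hgfin : ∀ i, ∑' j, G i j ≠ ⊤ := by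
    intro i
    exact (lt_of_le_of_lt (ENNReal.le_tsum i) (lt_of_le_of_lt hE ENNReal.ofReal_lt_top)).ne
  have hinner : ∀ i, ∑' j, |x i| * |x j| / ((i:ℝ) + (j:ℝ) + a) = (∑' j, G i j).toReal := by
    intro i
    rw [ENNReal.tsum_toReal_eq fun j => ENNReal.ofReal_ne_top]
    congr 1; funext j
    rw [ENNReal.toReal_ofReal
      (div_nonneg (mul_nonneg (abs_nonneg _) (abs_nonneg _)) (hd i j).le)]
  calc ∑' i, ∑' j, |x i| * |x j| / ((i:ℝ) + (j:ℝ) + a)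
      = ∑' i, (∑' j, G i j).toReal := by simp_rw [hinner]
    _ = (∑' i, ∑' j, G i j).toReal := (ENNReal.tsum_toReal_eq hgfin).symm
    _ ≤ (ENNReal.ofReal (lam * S)).toReal := ENNReal.toReal_mono ENNReal.ofReal_ne_top hE
    _ = lam * S := ENNReal.toReal_ofReal (by positivity)
end

section
/- Let 0 < λ ≤ 1/2 and m ≥ 2. If μ is a real number such that there exists a nonzero x in l^1 with ||x||_{l^1}^{2-m}·Σ_{i_2,...,i_m ≥ 0} x_{i_2}···x_{i_m}/(i+i_2+...+i_m+λ) = μ x_i for all i ≥ 0, then |μ| ≤ π/sin(λπ). -/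
open Real Finset MeasureTheory intervalIntegral

noncomputable def qseq (lam : ℝ) : ℕ → ℝ
  | 0 => 1
  | (n+1) => qseq lam n * ((n + lam)/(n+1))

lemma qseq_pos {lam : ℝ} (h0 : 0 < lam) (n : ℕ) : 0 < qseq lam n := by
  induction n with
  | zero => norm_num [qseq]
  | succ n ih =>
    rw [qseq]
    positivity

lemma qseq_rec {lam : ℝ} (n : ℕ) :
    ((n : ℝ) + 1) * qseq lam (n+1) = ((n : ℝ) + lam) * qseq lam n := by
  rw [qseq]
  field_simp

lemma qseq_low {lam : ℝ} (h0 : 0 < lam) (n : ℕ) : lam ≤ qseq lam n * ((n : ℝ) + lam) := by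
  induction n with
  | zero => simp [qseq]
  | succ n ih =>
    have h1 : qseq lam (n+1) = qseq lam n * ((n + lam)/(n+1)) := rfl
    have hp := qseq_pos h0 n
    calc lam ≤ qseq lam n * ((n : ℝ) + lam) := ih
    _ ≤ qseq lam (n+1) * (((n:ℕ):ℝ) + 1 + lam) := by
        rw [h1, show qseq lam n * (((n:ℝ) + lam) / ((n:ℝ) + 1)) * ((n:ℝ) + 1 + lam)
          = qseq lam n * (((n:ℝ)+lam) * ((n:ℝ)+1+lam)) / ((n:ℝ)+1) from by ring,
          le_div_iff₀ (by positivity)]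
        nlinarith [mul_pos hp h0, mul_nonneg (mul_nonneg hp.le h0.le) (Nat.cast_nonneg n)]
    _ = qseq lam (n+1) * (((n+1:ℕ):ℝ) + lam) := by push_cast; ring

lemma qseq_gamma {lam : ℝ} (h0 : 0 < lam) (n : ℕ) :
    qseq lam n = Real.Gamma ((n:ℝ) + lam) / (Real.Gamma lam * (n.factorial : ℝ)) := by
  induction n with
  | zero => simp [qseq, div_self (Real.Gamma_pos_of_pos h0).ne']
  | succ n ih =>
    have hg : Real.Gamma (((n+1:ℕ):ℝ) + lam) = ((n:ℝ) + lam) * Real.Gamma ((n:ℝ) + lam) := by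
      have : (((n+1:ℕ):ℝ) + lam) = ((n:ℝ) + lam) + 1 := by push_cast; ring
      rw [this, Real.Gamma_add_one (by positivity)]
    have hrec := qseq_rec (lam := lam) n
    rw [ih] at hrec
    have hfac : ((n+1).factorial : ℝ) = ((n:ℝ)+1) * (n.factorial : ℝ) := by
      push_cast [Nat.factorial_succ]; ring
    have hΓ := (Real.Gamma_pos_of_pos h0).ne'
    have hf : (n.factorial : ℝ) ≠ 0 := by positivity
    rw [hg, hfac]
    have hn1 : ((n:ℝ)+1) ≠ 0 := by positivity
    field_simp at hrec ⊢
    nlinarith [hrec]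

lemma poly_id (lam : ℝ) (M : ℕ) (x : ℝ) :
    (1 - x) * ∑ n ∈ range (M+1), qseq lam n * ((n : ℝ) * x^(n-1))
      - lam * ∑ n ∈ range (M+1), qseq lam n * x^n
    = -(((M:ℝ) + lam) * qseq lam M * x^M) := by
  induction M with
  | zero => simp [qseq]
  | succ M ih =>
    rw [Finset.sum_range_succ (f := fun n => qseq lam n * ((n : ℝ) * x^(n-1))),
        Finset.sum_range_succ (f := fun n => qseq lam n * x^n)]
    have hsub : (M + 1) - 1 = M := by omega
    rw [hsub]
    have hrec := qseq_rec (lam := lam) M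
    push_cast
    linear_combination ih + x^M * hrec

lemma partial_sum_le {lam : ℝ} (h0 : 0 < lam) (N : ℕ) {t : ℝ}
    (ht0 : 0 ≤ t) (ht1 : t < 1) :
    ∑ n ∈ range N, qseq lam n * t^n ≤ (1-t)^(-lam) := by
  have h1t : 0 < 1 - t := by linarith
  have hpow : (0:ℝ) < (1-t)^lam := rpow_pos_of_pos h1t lam
  suffices h : (1-t)^lam * ∑ n ∈ range N, qseq lam n * t^n ≤ 1 by
    rw [rpow_neg h1t.le, ← mul_le_mul_iff_right₀ hpow, mul_inv_cancel₀ hpow.ne']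
    exact h
  cases N with
  | zero => simp
  | succ M =>
    set g : ℝ → ℝ := fun s => (1-s)^lam * ∑ n ∈ range (M+1), qseq lam n * s^n with hg
    have hg0 : g 0 = 1 := by
      simp [hg, Finset.sum_range_succ', qseq]
    rcases eq_or_lt_of_le ht0 with h|htpos
    · rw [← h]
      simpa [hg] using hg0.le
    · have hDer : ∀ s ∈ Set.Ioo (0:ℝ) t, HasDerivAt g
          ((1-s)^(lam-1) * (-(((M:ℝ)+lam) * qseq lam M * s^M))) s := by
        intro s hs
        have h1s : 0 < 1 - s := by
          have := hs.2; linarith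
        have hd1 : HasDerivAt (fun s : ℝ => (1-s)^lam) (lam * (1-s)^(lam-1) * (-1)) s := by
          have hin : HasDerivAt (fun s : ℝ => 1 - s) (-1) s := (hasDerivAt_id s).const_sub 1
          exact (Real.hasDerivAt_rpow_const (Or.inl h1s.ne')).comp s hin
        have hd2 : HasDerivAt (fun s : ℝ => ∑ n ∈ range (M+1), qseq lam n * s^n)
            (∑ n ∈ range (M+1), qseq lam n * ((n:ℝ) * s^(n-1))) s :=
          HasDerivAt.fun_sum fun n _ => (hasDerivAt_pow n s).const_mul (qseq lam n)
        have hd := hd1.mul hd2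
        have hkey := poly_id lam M s
        have hrw : (1-s)^lam = (1-s)^(lam-1) * (1-s) := by
          rw [← Real.rpow_add_one h1s.ne']; norm_num
        have heq : lam * (1-s)^(lam-1) * (-1) * (∑ n ∈ range (M+1), qseq lam n * s^n)
            + (1-s)^lam * (∑ n ∈ range (M+1), qseq lam n * ((n:ℝ) * s^(n-1)))
            = (1-s)^(lam-1) * (-(((M:ℝ)+lam) * qseq lam M * s^M)) := by
          rw [hrw]
          linear_combination ((1-s)^(lam-1)) * hkey
        rw [heq] at hd
        exact hd
      have hmono : AntitoneOn g (Set.Icc 0 t) := by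
        apply antitoneOn_of_deriv_nonpos (convex_Icc 0 t)
        · exact ((continuous_const.sub continuous_id).continuousOn.rpow_const
            fun x _ => Or.inr h0.le).mul
            (continuous_finset_sum _ fun n _ => continuous_const.mul (continuous_pow n)).continuousOn
        · intro s hs
          rw [interior_Icc] at hs
          exact (hDer s hs).differentiableAt.differentiableWithinAt
        · intro s hs
          rw [interior_Icc] at hs
          rw [(hDer s hs).deriv]
          have hq := qseq_pos h0 M
          have h1s : 0 < 1 - s := by have := hs.2; linarith
          have hs0 : 0 ≤ s := hs.1.le
          exact mul_nonpos_of_nonneg_of_nonpos (rpow_nonneg h1s.le _)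
            (neg_nonpos.mpr (by positivity))
      have := hmono (Set.mem_Icc.mpr ⟨le_rfl, ht0⟩) (Set.mem_Icc.mpr ⟨ht0, le_rfl⟩) ht0
      rw [hg0] at this
      exact this

lemma beta_integrable {u v : ℝ} (hu : 0 < u) (hv : 0 < v) :
    IntervalIntegrable (fun x : ℝ => x ^ (u-1) * (1-x) ^ (v-1)) volume 0 1 := by
  have hc := Complex.betaIntegral_convergent (u := u) (v := v) (by simpa) (by simpa)
  rw [intervalIntegrable_iff_integrableOn_Ioc_of_le zero_le_one] at hc ⊢
  have hre : IntegrableOn (fun x : ℝ => RCLike.re ((x : ℂ) ^ ((u:ℂ) - 1) * (1 - (x:ℂ)) ^ ((v:ℂ) - 1))) (Set.Ioc (0:ℝ) 1) volume := hc.re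
  apply hre.congr_fun ?_ measurableSet_Ioc
  intro x hx
  have hx0 : (0:ℝ) ≤ x := hx.1.le
  have hx1 : (0:ℝ) ≤ 1 - x := by linarith [hx.2]
  have e1 : ((x : ℂ) ^ ((u:ℂ) - 1)) = ((x ^ (u-1) : ℝ) : ℂ) := by
    rw [Complex.ofReal_cpow hx0]
    push_cast
    ring_nf
  have e2 : (((1 - x : ℝ) : ℂ) ^ ((v:ℂ) - 1)) = (((1-x) ^ (v-1) : ℝ) : ℂ) := by
    rw [Complex.ofReal_cpow hx1]
    push_cast
    ring_nf
  simp only [Complex.ofReal_sub, Complex.ofReal_one] at e2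
  simp [e1, e2, ← Complex.ofReal_mul]

lemma beta_eval {u v : ℝ} (hu : 0 < u) (hv : 0 < v) :
    ∫ x in (0:ℝ)..1, x ^ (u-1) * (1-x) ^ (v-1)
      = Real.Gamma u * Real.Gamma v / Real.Gamma (u+v) := by
  have hB := Complex.Gamma_mul_Gamma_eq_betaIntegral (s := u) (t := v) (by simpa) (by simpa)
  have hbeta : Complex.betaIntegral u v
      = ((∫ x in (0:ℝ)..1, x ^ (u-1) * (1-x) ^ (v-1) : ℝ) : ℂ) := by
    rw [Complex.betaIntegral]
    rw [← intervalIntegral.integral_ofReal]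
    apply intervalIntegral.integral_congr
    intro x hx
    rw [Set.uIcc_of_le zero_le_one] at hx
    have hx0 : (0:ℝ) ≤ x := hx.1
    have hx1 : (0:ℝ) ≤ 1 - x := by linarith [hx.2]
    have e1 : ((x : ℂ) ^ ((u:ℂ) - 1)) = ((x ^ (u-1) : ℝ) : ℂ) := by
      rw [Complex.ofReal_cpow hx0]; push_cast; ring_nf
    have e2 : (((1 - x : ℝ) : ℂ) ^ ((v:ℂ) - 1)) = (((1-x) ^ (v-1) : ℝ) : ℂ) := by
      rw [Complex.ofReal_cpow hx1]; push_cast; ring_nf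
    simp only [Complex.ofReal_sub, Complex.ofReal_one] at e2
    simp [e1, e2, ← Complex.ofReal_mul]
  rw [hbeta, Complex.Gamma_ofReal, Complex.Gamma_ofReal, ← Complex.ofReal_mul] at hB
  have huv : Complex.Gamma ((u:ℂ) + v) = ((Real.Gamma (u+v) : ℝ) : ℂ) := by
    rw [← Complex.ofReal_add, Complex.Gamma_ofReal]
  rw [huv, ← Complex.ofReal_mul] at hB
  have := Complex.ofReal_inj.mp hB
  have hΓ : Real.Gamma (u+v) ≠ 0 := (Real.Gamma_pos_of_pos (by linarith)).ne'
  field_simp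
  linarith [this]

set_option maxHeartbeats 1000000 in
lemma key_sum {lam : ℝ} (h0 : 0 < lam) (h1 : lam < 1) (m N : ℕ) :
    ∑ n ∈ range N, qseq lam n / ((m:ℝ) + n + lam)
      ≤ (Real.Gamma lam * Real.Gamma (1-lam)) * qseq lam m := by
  have hbpos : ∀ n : ℕ, (0:ℝ) < (m:ℝ) + n + lam := by
    intro n
    positivity
  have hexp : ∀ n : ℕ, (-1:ℝ) < (m:ℝ)+n+lam-1 := by
    intro n
    have := hbpos n; linarith
  -- the beta integrand
  have hv : (0:ℝ) < 1 - lam := by linarith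
  have hu : (0:ℝ) < (m:ℝ) + lam := by positivity
  have hbeta_int : IntervalIntegrable
      (fun x : ℝ => x ^ ((m:ℝ)+lam-1) * (1-x) ^ (-lam)) volume 0 1 := by
    have := beta_integrable (u := (m:ℝ)+lam) (v := 1-lam) hu hv
    have e : (1:ℝ) - lam - 1 = -lam := by ring
    rwa [e] at this
  have hbeta_val : ∫ x in (0:ℝ)..1, x ^ ((m:ℝ)+lam-1) * (1-x) ^ (-lam)
      = (Real.Gamma lam * Real.Gamma (1-lam)) * qseq lam m := by
    have := beta_eval (u := (m:ℝ)+lam) (v := 1-lam) hu hv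
    have e : (1:ℝ) - lam - 1 = -lam := by ring
    rw [e] at this
    rw [this]
    have e2 : (m:ℝ) + lam + (1 - lam) = (m:ℝ) + 1 := by ring
    rw [e2, Real.Gamma_nat_eq_factorial, qseq_gamma h0 m]
    have hG := (Real.Gamma_pos_of_pos h0).ne'
    have hf : ((m.factorial : ℝ)) ≠ 0 := by positivity
    field_simp
  -- step 1 : express partial sum as an integral
  have step1 : ∑ n ∈ range N, qseq lam n / ((m:ℝ) + n + lam)
      = ∫ x in (0:ℝ)..1, ∑ n ∈ range N, qseq lam n * x ^ ((m:ℝ)+n+lam-1) := by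
    rw [intervalIntegral.integral_finset_sum]
    · apply Finset.sum_congr rfl
      intro n _
      rw [intervalIntegral.integral_const_mul]
      rw [integral_rpow (Or.inl (hexp n))]
      have : (m:ℝ)+n+lam-1+1 = (m:ℝ)+n+lam := by ring
      rw [this, Real.one_rpow, Real.zero_rpow (hbpos n).ne']
      ring
    · intro n _
      exact (intervalIntegrable_rpow' (hexp n)).const_mul _
  have hterm_int : ∀ n : ℕ, IntegrableOn
      (fun x : ℝ => qseq lam n * x ^ ((m:ℝ)+n+lam-1)) (Set.Ioo (0:ℝ) 1) volume := by
    intro n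
    have h' : IntervalIntegrable (fun x : ℝ => qseq lam n * x ^ ((m:ℝ)+n+lam-1)) volume 0 1 :=
      (intervalIntegrable_rpow' (hexp n)).const_mul _
    rw [intervalIntegrable_iff_integrableOn_Ioc_of_le zero_le_one] at h'
    exact h'.mono_set Set.Ioo_subset_Ioc_self
  have hint1 : IntegrableOn
      (fun x : ℝ => ∑ n ∈ range N, qseq lam n * x ^ ((m:ℝ)+n+lam-1)) (Set.Ioo (0:ℝ) 1) volume :=
    MeasureTheory.integrable_finset_sum (range N) (fun n _ => hterm_int n)
  have hint2 : IntegrableOn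
      (fun x : ℝ => x ^ ((m:ℝ)+lam-1) * (1-x) ^ (-lam)) (Set.Ioo (0:ℝ) 1) volume := by
    have h' := hbeta_int
    rw [intervalIntegrable_iff_integrableOn_Ioc_of_le zero_le_one] at h'
    exact h'.mono_set Set.Ioo_subset_Ioc_self
  have hpt : ∀ x ∈ Set.Ioo (0:ℝ) 1,
      (∑ n ∈ range N, qseq lam n * x ^ ((m:ℝ)+n+lam-1))
        ≤ x ^ ((m:ℝ)+lam-1) * (1-x) ^ (-lam) := by
    intro x hx
    have hx0 : 0 < x := hx.1
    have hx1 : x < 1 := hx.2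
    have hterm : ∀ n : ℕ, qseq lam n * x ^ ((m:ℝ)+n+lam-1)
        = x ^ ((m:ℝ)+lam-1) * (qseq lam n * x ^ n) := by
      intro n
      have e : (m:ℝ)+n+lam-1 = ((m:ℝ)+lam-1) + n := by ring
      rw [e, Real.rpow_add hx0, Real.rpow_natCast]
      ring
    rw [Finset.sum_congr rfl (fun n _ => hterm n), ← Finset.mul_sum]
    have hb := partial_sum_le h0 N hx0.le hx1
    exact mul_le_mul_of_nonneg_left hb (Real.rpow_nonneg hx0.le _)
  rw [step1, ← hbeta_val]
  rw [intervalIntegral.integral_of_le zero_le_one, intervalIntegral.integral_of_le zero_le_one,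
    MeasureTheory.integral_Ioc_eq_integral_Ioo, MeasureTheory.integral_Ioc_eq_integral_Ioo]
  exact setIntegral_mono_on hint1 hint2 measurableSet_Ioo hpt

lemma key_summable {lam : ℝ} (h0 : 0 < lam) (h1 : lam < 1) (m : ℕ) :
    Summable (fun n : ℕ => qseq lam n / ((m:ℝ) + n + lam)) :=
  summable_of_sum_range_le
    (fun n => div_nonneg (qseq_pos h0 n).le (by positivity))
    (fun N => key_sum h0 h1 m N)

lemma key_tsum_le {lam : ℝ} (h0 : 0 < lam) (h1 : lam < 1) (m : ℕ) :
    ∑' n : ℕ, qseq lam n / ((m:ℝ) + n + lam)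
      ≤ (Real.Gamma lam * Real.Gamma (1-lam)) * qseq lam m :=
  Real.tsum_le_of_sum_range_le
    (fun n => div_nonneg (qseq_pos h0 n).le (by positivity))
    (fun N => key_sum h0 h1 m N)

lemma ingham {lam : ℝ} (h0 : 0 < lam) (h1 : lam < 1) (a : ℕ → ℝ)
    (ha : ∀ n, 0 ≤ a n) (hsa : Summable a) (hsq : Summable (fun n => (a n)^2)) :
    ∑' i : ℕ, a i * ∑' j : ℕ, a j / ((i:ℝ) + j + lam)
      ≤ (Real.Gamma lam * Real.Gamma (1-lam)) * ∑' n, (a n)^2 := by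
  set C := Real.Gamma lam * Real.Gamma (1-lam) with hC
  have hCpos : 0 < C := mul_pos (Real.Gamma_pos_of_pos h0) (Real.Gamma_pos_of_pos (by linarith))
  set q := qseq lam with hq
  have hqpos : ∀ n, 0 < q n := qseq_pos h0
  have hden : ∀ i j : ℕ, (0:ℝ) < (i:ℝ) + j + lam := fun i j => by positivity
  -- the two halves of the Schur bound
  set T1 : ℕ × ℕ → ℝ := fun p => ((a p.1)^2 / (2 * q p.1)) * (q p.2 / ((p.1:ℝ) + p.2 + lam))
    with hT1
  set T2 : ℕ × ℕ → ℝ := fun p => ((a p.2)^2 / (2 * q p.2)) * (q p.1 / ((p.1:ℝ) + p.2 + lam))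
    with hT2
  have hT1nn : ∀ p, 0 ≤ T1 p := fun p => by
    have := hqpos p.1; have := hqpos p.2; have := hden p.1 p.2
    positivity
  have hT2nn : ∀ p, 0 ≤ T2 p := fun p => by
    have := hqpos p.1; have := hqpos p.2; have := hden p.1 p.2
    positivity
  -- pointwise Schur bound
  have hpt : ∀ i j : ℕ, a i * (a j / ((i:ℝ) + j + lam)) ≤ T1 (i, j) + T2 (i, j) := by
    intro i j
    have hd := hden i j
    have hqi := hqpos i
    have hqj := hqpos j
    have hamgm : a i * a j ≤ (a i)^2 / (2 * q i) * q j + (a j)^2 / (2 * q j) * q i := by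
      rw [← sub_nonneg]
      have e : (a i)^2 / (2 * q i) * q j + (a j)^2 / (2 * q j) * q i - a i * a j
          = (a i * q j - a j * q i)^2 / (2 * q i * q j) := by
        field_simp
        ring
      rw [e]
      positivity
    have : a i * (a j / ((i:ℝ) + j + lam)) = (a i * a j) * (1 / ((i:ℝ)+j+lam)) := by ring
    rw [this, hT1, hT2]
    simp only
    have e2 : (a i)^2 / (2 * q i) * (q j / ((i:ℝ)+j+lam)) + (a j)^2 / (2 * q j) * (q i / ((i:ℝ)+j+lam))
        = ((a i)^2 / (2 * q i) * q j + (a j)^2 / (2 * q j) * q i) * (1 / ((i:ℝ)+j+lam)) := by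
      ring
    rw [e2]
    exact mul_le_mul_of_nonneg_right hamgm (by positivity)
  -- summability of the two halves on the product
  have hsumT1 : Summable T1 := by
    refine (summable_prod_of_nonneg hT1nn).2 ⟨fun i => ?_, ?_⟩
    · simp only [hT1]
      exact (key_summable h0 h1 i).mul_left _
    · apply Summable.of_nonneg_of_le (fun i => tsum_nonneg fun j => hT1nn _) ?_
        (hsq.mul_left (C/2))
      intro i
      have hqi := hqpos i
      simp only [hT1]
      rw [tsum_mul_left]
      calc (a i)^2/(2*q i) * ∑' j : ℕ, q j/((i:ℝ)+j+lam)
          ≤ (a i)^2/(2*q i) * (C * q i) :=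
            mul_le_mul_of_nonneg_left (key_tsum_le h0 h1 i) (by positivity)
        _ = C/2 * (a i)^2 := by field_simp
  have hswap : Summable (fun p : ℕ × ℕ => T2 (p.2, p.1)) := by
    refine (summable_prod_of_nonneg (fun p => hT2nn _)).2 ⟨fun j => ?_, ?_⟩
    · have := (key_summable h0 h1 j).mul_left ((a j)^2/(2 * q j))
      apply this.congr
      intro i
      simp only [hT2]
      rw [show (i:ℝ)+j+lam = (j:ℝ)+i+lam from by ring]
    · apply Summable.of_nonneg_of_le (fun j => tsum_nonneg fun i => hT2nn _) ?_
        (hsq.mul_left (C/2))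
      intro j
      have hqj := hqpos j
      have e : ∀ i : ℕ, T2 (i, j) = (a j)^2/(2*q j) * (q i/((j:ℝ)+i+lam)) := by
        intro i
        simp only [hT2]
        rw [show (i:ℝ)+j+lam = (j:ℝ)+i+lam from by ring]
      rw [tsum_congr e, tsum_mul_left]
      calc (a j)^2/(2*q j) * ∑' i : ℕ, q i/((j:ℝ)+i+lam)
          ≤ (a j)^2/(2*q j) * (C * q j) :=
            mul_le_mul_of_nonneg_left (key_tsum_le h0 h1 j) (by positivity)
        _ = C/2 * (a j)^2 := by field_simp
  have hsumT2 : Summable T2 := (Equiv.prodComm ℕ ℕ).summable_iff.mp hswap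
  have hH : Summable (fun p : ℕ × ℕ => T1 p + T2 p) := hsumT1.add hsumT2
  -- inner summability of the left side
  have hFinner : ∀ i : ℕ, Summable (fun j : ℕ => a j / ((i:ℝ)+j+lam)) := by
    intro i
    apply Summable.of_nonneg_of_le (fun j => div_nonneg (ha j) (hden i j).le) ?_
      (hsa.div_const lam)
    intro j
    apply div_le_div_of_nonneg_left (ha j) h0
    have : (0:ℝ) ≤ (i:ℝ) + j := by positivity
    linarith
  have hinner_le : ∀ i : ℕ, ∑' j : ℕ, a j / ((i:ℝ)+j+lam) ≤ (∑' n, a n)/lam := by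
    intro i
    have : ∀ j : ℕ, a j / ((i:ℝ)+j+lam) ≤ a j / lam := by
      intro j
      apply div_le_div_of_nonneg_left (ha j) h0
      have : (0:ℝ) ≤ (i:ℝ) + j := by positivity
      linarith
    calc ∑' j : ℕ, a j / ((i:ℝ)+j+lam) ≤ ∑' j : ℕ, a j / lam :=
          Summable.tsum_le_tsum this (hFinner i) (hsa.div_const lam)
      _ = (∑' n, a n)/lam := by rw [tsum_div_const]
  -- first inequality: double sum bound
  have hmain : ∑' i : ℕ, a i * ∑' j : ℕ, a j / ((i:ℝ) + j + lam)
      ≤ ∑' i : ℕ, ∑' j : ℕ, (T1 (i, j) + T2 (i, j)) := by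
    apply Summable.tsum_le_tsum ?_ ?_ ?_
    · intro i
      rw [← tsum_mul_left]
      exact Summable.tsum_le_tsum (fun j => hpt i j) ((hFinner i).mul_left (a i))
        ((hH.prod_factor i).congr (fun j => rfl))
    · apply Summable.of_nonneg_of_le
        (fun i => mul_nonneg (ha i) (tsum_nonneg fun j => div_nonneg (ha j) (hden i j).le)) ?_
        (hsa.mul_right ((∑' n, a n)/lam))
      intro i
      exact mul_le_mul_of_nonneg_left (hinner_le i) (ha i)
    · exact ((summable_prod_of_nonneg (fun p => add_nonneg (hT1nn p) (hT2nn p))).1 hH).2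
  have hslices : ∀ i : ℕ, Summable (fun j : ℕ => T1 (i, j) + T2 (i, j)) :=
    fun i => (hH.prod_factor i).congr (fun j => rfl)
  have hT1slices : ∀ i : ℕ, Summable (fun j : ℕ => T1 (i, j)) :=
    fun i => (hsumT1.prod_factor i).congr (fun j => rfl)
  have hT2slices : ∀ j : ℕ, Summable (fun i : ℕ => T2 (i, j)) :=
    fun j => (hswap.prod_factor j).congr (fun i => rfl)
  have hT1tot : ∑' p : ℕ × ℕ, T1 p ≤ C/2 * ∑' n, (a n)^2 := by
    rw [Summable.tsum_prod' hsumT1 hT1slices, ← tsum_mul_left]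
    apply Summable.tsum_le_tsum ?_ ((summable_prod_of_nonneg hT1nn).1 hsumT1).2 (hsq.mul_left (C/2))
    intro i
    have hqi := hqpos i
    simp only [hT1]
    rw [tsum_mul_left]
    calc (a i)^2/(2*q i) * ∑' j : ℕ, q j/((i:ℝ)+j+lam)
        ≤ (a i)^2/(2*q i) * (C * q i) :=
          mul_le_mul_of_nonneg_left (key_tsum_le h0 h1 i) (by positivity)
      _ = C/2 * (a i)^2 := by field_simp
  have hT2tot : ∑' p : ℕ × ℕ, T2 p ≤ C/2 * ∑' n, (a n)^2 := by
    have he : ∑' p : ℕ × ℕ, T2 p = ∑' p : ℕ × ℕ, T2 (p.2, p.1) := by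
      rw [← (Equiv.prodComm ℕ ℕ).tsum_eq T2]
      exact tsum_congr fun p => rfl
    have he2 : ∑' p : ℕ × ℕ, T2 (p.2, p.1) = ∑' j : ℕ, ∑' i : ℕ, T2 (i, j) := by
      rw [Summable.tsum_prod' hswap (fun j => hswap.prod_factor j)]
    rw [he, he2, ← tsum_mul_left]
    apply Summable.tsum_le_tsum ?_ ((summable_prod_of_nonneg (fun p => hT2nn _)).1 hswap).2
      (hsq.mul_left (C/2))
    intro j
    have hqj := hqpos j
    have e : ∀ i : ℕ, T2 (i, j) = (a j)^2/(2*q j) * (q i/((j:ℝ)+i+lam)) := by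
      intro i
      simp only [hT2]
      rw [show (i:ℝ)+j+lam = (j:ℝ)+i+lam from by ring]
    rw [tsum_congr e, tsum_mul_left]
    calc (a j)^2/(2*q j) * ∑' i : ℕ, q i/((j:ℝ)+i+lam)
        ≤ (a j)^2/(2*q j) * (C * q j) :=
          mul_le_mul_of_nonneg_left (key_tsum_le h0 h1 j) (by positivity)
      _ = C/2 * (a j)^2 := by field_simp
  calc ∑' i : ℕ, a i * ∑' j : ℕ, a j / ((i:ℝ) + j + lam)
      ≤ ∑' i : ℕ, ∑' j : ℕ, (T1 (i, j) + T2 (i, j)) := hmain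
    _ = ∑' p : ℕ × ℕ, (T1 p + T2 p) := (Summable.tsum_prod' hH hslices).symm
    _ = ∑' p : ℕ × ℕ, T1 p + ∑' p : ℕ × ℕ, T2 p := Summable.tsum_add hsumT1 hsumT2
    _ ≤ C/2 * ∑' n, (a n)^2 + C/2 * ∑' n, (a n)^2 := add_le_add hT1tot hT2tot
    _ = C * ∑' n, (a n)^2 := by ring

lemma prod_hasSum (a : ℕ → ℝ) (ha : ∀ n, 0 ≤ a n) (hsa : Summable a) :
    ∀ k : ℕ, HasSum (fun t : Fin k → ℕ => ∏ j, a (t j)) ((∑' n, a n) ^ k) := by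
  intro k
  induction k with
  | zero =>
    have h : ∀ t' : Fin 0 → ℕ, t' ≠ (fun i => i.elim0) → (∏ j, a (t' j)) = 0 := by
      intro t' ht'
      exact absurd (Subsingleton.elim t' _) ht'
    have := hasSum_single (f := fun t : Fin 0 → ℕ => ∏ j, a (t j)) (fun i => i.elim0) h
    simpa using this
  | succ k ih =>
    have hprod : HasSum (fun p : ℕ × (Fin k → ℕ) => a p.1 * ∏ j, a (p.2 j))
        ((∑' n, a n) * (∑' n, a n) ^ k) :=
      HasSum.mul (f := a) (g := fun t : Fin k → ℕ => ∏ j, a (t j)) hsa.hasSum ih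
        (Summable.mul_of_nonneg (f := a) (g := fun t : Fin k → ℕ => ∏ j, a (t j))
          hsa ih.summable ha
          (fun t => Finset.prod_nonneg fun j _ => ha _))
    have he : (fun t : Fin (k+1) → ℕ => ∏ j, a (t j)) ∘ (Fin.consEquiv (fun _ => ℕ))
        = (fun p : ℕ × (Fin k → ℕ) => a p.1 * ∏ j, a (p.2 j)) := by
      funext p
      simp [Fin.consEquiv, Fin.prod_univ_succ]
    rw [pow_succ']
    rw [← (Fin.consEquiv (fun _ => ℕ)).hasSum_iff, he]
    exact hprod

lemma tensor_bound (a : ℕ → ℝ) (ha : ∀ n, 0 ≤ a n) (hsa : Summable a)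
    {lam : ℝ} (h0 : 0 < lam) (i k : ℕ)
    (hU : Summable (fun n : ℕ => a n / ((i:ℝ)+n+lam))) :
    Summable (fun t : Fin (k+1) → ℕ =>
      (∏ j, a (t j)) / ((i:ℝ) + (∑ j, ((t j : ℕ) : ℝ)) + lam))
    ∧ ∑' t : Fin (k+1) → ℕ, (∏ j, a (t j)) / ((i:ℝ) + (∑ j, ((t j : ℕ) : ℝ)) + lam)
      ≤ (∑' n : ℕ, a n / ((i:ℝ)+n+lam)) * (∑' n, a n) ^ k := by
  have hG : HasSum (fun p : ℕ × (Fin k → ℕ) => (a p.1 / ((i:ℝ)+p.1+lam)) * ∏ j, a (p.2 j))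
      ((∑' n : ℕ, a n / ((i:ℝ)+n+lam)) * (∑' n, a n) ^ k) :=
    HasSum.mul (f := fun n : ℕ => a n / ((i:ℝ)+n+lam)) (g := fun t : Fin k → ℕ => ∏ j, a (t j))
      hU.hasSum (prod_hasSum a ha hsa k)
      (Summable.mul_of_nonneg (f := fun n : ℕ => a n / ((i:ℝ)+n+lam))
        (g := fun t : Fin k → ℕ => ∏ j, a (t j)) hU (prod_hasSum a ha hsa k).summable
        (fun n => div_nonneg (ha n) (by positivity))
        (fun t => Finset.prod_nonneg fun j _ => ha _))
  have he : (fun t : Fin (k+1) → ℕ => (a (t 0) / ((i:ℝ) + (t 0) + lam)) * ∏ j : Fin k, a (t j.succ))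
        ∘ (Fin.consEquiv (fun _ => ℕ))
      = (fun p : ℕ × (Fin k → ℕ) => (a p.1 / ((i:ℝ)+p.1+lam)) * ∏ j, a (p.2 j)) := by
    funext p
    simp [Fin.consEquiv]
  have hRHS : HasSum (fun t : Fin (k+1) → ℕ =>
      (a (t 0) / ((i:ℝ) + (t 0) + lam)) * ∏ j : Fin k, a (t j.succ))
      ((∑' n : ℕ, a n / ((i:ℝ)+n+lam)) * (∑' n, a n) ^ k) := by
    rw [← (Fin.consEquiv (fun _ => ℕ)).hasSum_iff, he]
    exact hG
  have hterm : ∀ t : Fin (k+1) → ℕ,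
      (∏ j, a (t j)) / ((i:ℝ) + (∑ j, ((t j : ℕ) : ℝ)) + lam)
        ≤ (a (t 0) / ((i:ℝ) + (t 0) + lam)) * ∏ j : Fin k, a (t j.succ) := by
    intro t
    have hprodnn : (0:ℝ) ≤ ∏ j, a (t j) := Finset.prod_nonneg fun j _ => ha _
    have htailnn : (0:ℝ) ≤ ∏ j : Fin k, a (t j.succ) := Finset.prod_nonneg fun j _ => ha _
    have hsum : ((t 0 : ℕ) : ℝ) ≤ ∑ j, ((t j : ℕ) : ℝ) := by
      rw [Fin.sum_univ_succ]
      have : (0:ℝ) ≤ ∑ j : Fin k, ((t j.succ : ℕ) : ℝ) :=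
        Finset.sum_nonneg fun j _ => by positivity
      linarith
    have hd1 : (0:ℝ) < (i:ℝ) + (t 0) + lam := by positivity
    have hd2 : (i:ℝ) + (t 0) + lam ≤ (i:ℝ) + (∑ j, ((t j : ℕ) : ℝ)) + lam := by linarith
    calc (∏ j, a (t j)) / ((i:ℝ) + (∑ j, ((t j : ℕ) : ℝ)) + lam)
        ≤ (∏ j, a (t j)) / ((i:ℝ) + (t 0) + lam) :=
          div_le_div_of_nonneg_left hprodnn hd1 hd2
      _ = (a (t 0) / ((i:ℝ) + (t 0) + lam)) * ∏ j : Fin k, a (t j.succ) := by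
          rw [Fin.prod_univ_succ]
          ring
  have hfnn : ∀ t : Fin (k+1) → ℕ,
      (0:ℝ) ≤ (∏ j, a (t j)) / ((i:ℝ) + (∑ j, ((t j : ℕ) : ℝ)) + lam) := by
    intro t
    have : (0:ℝ) < (i:ℝ) + (∑ j, ((t j : ℕ) : ℝ)) + lam := by
      have : (0:ℝ) ≤ ∑ j, ((t j : ℕ) : ℝ) := Finset.sum_nonneg fun j _ => by positivity
      positivity
    exact div_nonneg (Finset.prod_nonneg fun j _ => ha _) this.le
  have hsummable := Summable.of_nonneg_of_le hfnn hterm hRHS.summable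
  exact ⟨hsummable, by
    calc ∑' t : Fin (k+1) → ℕ, (∏ j, a (t j)) / ((i:ℝ) + (∑ j, ((t j : ℕ) : ℝ)) + lam)
        ≤ ∑' t : Fin (k+1) → ℕ, (a (t 0) / ((i:ℝ) + (t 0) + lam)) * ∏ j : Fin k, a (t j.succ) :=
          Summable.tsum_le_tsum hterm hsummable hRHS.summable
      _ = _ := hRHS.tsum_eq⟩

theorem infinite_Z1_eigenvalue_bound_small_lambda (m : ℕ) (hm : 2 ≤ m)
    (lam : ℝ) (h0 : 0 < lam) (h1 : lam ≤ 1 / 2) (mu : ℝ) (x : ℕ → ℝ)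
    (hx : Summable fun i => |x i|) (hx0 : x ≠ 0)
    (heig : ∀ i : ℕ,
      (∑' k, |x k|) ^ ((2 : ℤ) - m) *
          ∑' t : Fin (m - 1) → ℕ,
            (∏ j, x (t j)) / ((i : ℝ) + (∑ j, ((t j : ℕ) : ℝ)) + lam) = mu * x i) :
    |mu| ≤ π / Real.sin (lam * π) := by
  have hlam1 : lam < 1 := by linarith
  obtain ⟨i₀, hi₀⟩ : ∃ i, x i ≠ 0 := by
    by_contra h
    push_neg at h
    exact hx0 (funext h)
  have hA0 : 0 < ∑' n, |x n| :=
    lt_of_lt_of_le (abs_pos.mpr hi₀) (Summable.le_tsum hx i₀ fun j _ => abs_nonneg _)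
  have hsq : Summable fun n => |x n|^2 := by
    apply Summable.of_nonneg_of_le (fun n => sq_nonneg _) ?_ (hx.mul_left (∑' n, |x n|))
    intro n
    rw [sq]
    exact mul_le_mul_of_nonneg_right (Summable.le_tsum hx n fun j _ => abs_nonneg _) (abs_nonneg _)
  have hB0 : 0 < ∑' n, |x n|^2 :=
    lt_of_lt_of_le (pow_pos (abs_pos.mpr hi₀) 2) (Summable.le_tsum hsq i₀ fun j _ => sq_nonneg _)
  obtain ⟨k, hk⟩ : ∃ k, m - 1 = k + 1 := ⟨m - 2, by omega⟩
  have hden : ∀ i n : ℕ, (0:ℝ) < (i:ℝ) + n + lam := fun i n => by positivity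
  have hU : ∀ i : ℕ, Summable (fun n : ℕ => |x n| / ((i:ℝ)+n+lam)) := by
    intro i
    apply Summable.of_nonneg_of_le (fun n => div_nonneg (abs_nonneg _) (hden i n).le) ?_
      (hx.div_const lam)
    intro n
    apply div_le_div_of_nonneg_left (abs_nonneg _) h0
    have : (0:ℝ) ≤ (i:ℝ) + n := by positivity
    linarith
  have hUle : ∀ i : ℕ, ∑' n : ℕ, |x n|/((i:ℝ)+n+lam) ≤ (∑' n, |x n|)/lam := by
    intro i
    have hb : ∀ n : ℕ, |x n|/((i:ℝ)+n+lam) ≤ |x n|/lam := by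
      intro n
      apply div_le_div_of_nonneg_left (abs_nonneg _) h0
      have : (0:ℝ) ≤ (i:ℝ) + n := by positivity
      linarith
    calc ∑' n : ℕ, |x n|/((i:ℝ)+n+lam) ≤ ∑' n : ℕ, |x n|/lam :=
          Summable.tsum_le_tsum hb (hU i) (hx.div_const lam)
      _ = (∑' n, |x n|)/lam := by rw [tsum_div_const]
  have hUnn : ∀ i : ℕ, (0:ℝ) ≤ ∑' n : ℕ, |x n|/((i:ℝ)+n+lam) :=
    fun i => tsum_nonneg fun n => div_nonneg (abs_nonneg _) (hden i n).le
  have hAz : (0:ℝ) < (∑' n, |x n|) ^ ((2:ℤ) - m) := zpow_pos hA0 _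
  have key : ∀ i : ℕ, |mu| * |x i| ≤ (∑' n, |x n|) ^ ((2:ℤ) - m) *
      ((∑' n : ℕ, |x n|/((i:ℝ)+n+lam)) * (∑' n, |x n|)^k) := by
    intro i
    have h := heig i
    rw [hk] at h
    have htb := tensor_bound (fun n => |x n|) (fun n => abs_nonneg _) hx h0 i k (hU i)
    have hdnn : ∀ t : Fin (k+1) → ℕ, (0:ℝ) < (i:ℝ) + (∑ j, ((t j : ℕ) : ℝ)) + lam := by
      intro t
      have : (0:ℝ) ≤ ∑ j, ((t j : ℕ) : ℝ) := Finset.sum_nonneg fun j _ => by positivity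
      positivity
    have hnorm : ∀ t : Fin (k+1) → ℕ,
        ‖(∏ j, x (t j)) / ((i:ℝ) + (∑ j, ((t j : ℕ) : ℝ)) + lam)‖
          = (∏ j, |x (t j)|) / ((i:ℝ) + (∑ j, ((t j : ℕ) : ℝ)) + lam) := by
      intro t
      rw [Real.norm_eq_abs, abs_div, Finset.abs_prod, abs_of_pos (hdnn t)]
    have hsum_norm : Summable (fun t : Fin (k+1) → ℕ =>
        ‖(∏ j, x (t j)) / ((i:ℝ) + (∑ j, ((t j : ℕ) : ℝ)) + lam)‖) :=
      htb.1.congr fun t => (hnorm t).symm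
    have habs : |∑' t : Fin (k+1) → ℕ, (∏ j, x (t j)) / ((i:ℝ) + (∑ j, ((t j : ℕ) : ℝ)) + lam)|
        ≤ (∑' n : ℕ, |x n|/((i:ℝ)+n+lam)) * (∑' n, |x n|)^k := by
      calc |∑' t : Fin (k+1) → ℕ, (∏ j, x (t j)) / ((i:ℝ) + (∑ j, ((t j : ℕ) : ℝ)) + lam)|
          ≤ ∑' t : Fin (k+1) → ℕ, ‖(∏ j, x (t j)) / ((i:ℝ) + (∑ j, ((t j : ℕ) : ℝ)) + lam)‖ := by
            rw [← Real.norm_eq_abs]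
            exact norm_tsum_le_tsum_norm hsum_norm
        _ = ∑' t : Fin (k+1) → ℕ, (∏ j, |x (t j)|) / ((i:ℝ) + (∑ j, ((t j : ℕ) : ℝ)) + lam) :=
            tsum_congr hnorm
        _ ≤ (∑' n : ℕ, |x n|/((i:ℝ)+n+lam)) * (∑' n, |x n|)^k := htb.2
    calc |mu| * |x i| = |mu * x i| := (abs_mul mu (x i)).symm
      _ = |(∑' n, |x n|) ^ ((2:ℤ) - m) *
            ∑' t : Fin (k+1) → ℕ, (∏ j, x (t j)) / ((i:ℝ) + (∑ j, ((t j : ℕ) : ℝ)) + lam)| := by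
          rw [h]
      _ = (∑' n, |x n|) ^ ((2:ℤ) - m) *
            |∑' t : Fin (k+1) → ℕ, (∏ j, x (t j)) / ((i:ℝ) + (∑ j, ((t j : ℕ) : ℝ)) + lam)| := by
          rw [abs_mul, abs_of_pos hAz]
      _ ≤ (∑' n, |x n|) ^ ((2:ℤ) - m) *
            ((∑' n : ℕ, |x n|/((i:ℝ)+n+lam)) * (∑' n, |x n|)^k) :=
          mul_le_mul_of_nonneg_left habs hAz.le
  have hz1 : (∑' n, |x n|) ^ ((2:ℤ) - m) * (∑' n, |x n|)^k = 1 := by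
    rw [← zpow_natCast (∑' n, |x n|) k, ← zpow_add₀ hA0.ne']
    have he : (2:ℤ) - m + k = 0 := by omega
    rw [he, zpow_zero]
  have hUa : Summable (fun i : ℕ => |x i| * ∑' n : ℕ, |x n|/((i:ℝ)+n+lam)) := by
    apply Summable.of_nonneg_of_le (fun i => mul_nonneg (abs_nonneg _) (hUnn i)) ?_
      (hx.mul_right ((∑' n, |x n|)/lam))
    intro i
    exact mul_le_mul_of_nonneg_left (hUle i) (abs_nonneg _)
  have main : |mu| * ∑' n, |x n|^2
      ≤ (Real.Gamma lam * Real.Gamma (1-lam)) * ∑' n, |x n|^2 := by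
    have hCB := ingham h0 hlam1 (fun n => |x n|) (fun n => abs_nonneg _) hx hsq
    calc |mu| * ∑' n, |x n|^2 = ∑' i : ℕ, |mu| * |x i|^2 := by rw [tsum_mul_left]
      _ ≤ ∑' i : ℕ, ((∑' n, |x n|) ^ ((2:ℤ) - m) * (∑' n, |x n|)^k) *
            (|x i| * ∑' n : ℕ, |x n|/((i:ℝ)+n+lam)) := by
          apply Summable.tsum_le_tsum ?_ (hsq.mul_left _) (hUa.mul_left _)
          intro i
          calc |mu| * |x i|^2 = (|mu| * |x i|) * |x i| := by ring
            _ ≤ ((∑' n, |x n|) ^ ((2:ℤ) - m) *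
                  ((∑' n : ℕ, |x n|/((i:ℝ)+n+lam)) * (∑' n, |x n|)^k)) * |x i| :=
                mul_le_mul_of_nonneg_right (key i) (abs_nonneg _)
            _ = ((∑' n, |x n|) ^ ((2:ℤ) - m) * (∑' n, |x n|)^k) *
                  (|x i| * ∑' n : ℕ, |x n|/((i:ℝ)+n+lam)) := by ring
      _ = ((∑' n, |x n|) ^ ((2:ℤ) - m) * (∑' n, |x n|)^k) *
            ∑' i : ℕ, |x i| * ∑' n : ℕ, |x n|/((i:ℝ)+n+lam) := tsum_mul_left
      _ = ∑' i : ℕ, |x i| * ∑' n : ℕ, |x n|/((i:ℝ)+n+lam) := by rw [hz1, one_mul]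
      _ ≤ (Real.Gamma lam * Real.Gamma (1-lam)) * ∑' n, |x n|^2 := hCB
  have hfin : |mu| ≤ Real.Gamma lam * Real.Gamma (1-lam) :=
    (mul_le_mul_iff_left₀ hB0).mp main
  calc |mu| ≤ Real.Gamma lam * Real.Gamma (1-lam) := hfin
    _ = π / Real.sin (π * lam) := Real.Gamma_mul_Gamma_one_sub lam
    _ = π / Real.sin (lam * π) := by rw [mul_comm]
end

section
/- Let m ≥ 2. If μ is a real number such that there exists a nonzero x in l^1 with ||x||_{l^1}^{2-m}·Σ_{i_2,...,i_m ≥ 0} x_{i_2}···x_{i_m}/(i+i_2+...+i_m+1) = μ x_i for all i ≥ 0, then |μ| ≤ π. -/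
open Real Set


noncomputable def myG (c : ℝ) : ℝ → ℝ := fun y => (2 / Real.sqrt c) * Real.arctan (Real.sqrt y / Real.sqrt c)
noncomputable def myF (c : ℝ) : ℝ → ℝ := fun y => ((c + y) * Real.sqrt y)⁻¹

lemma myHasDerivAt_G {c y : ℝ} (hc : 0 < c) (hy : 0 < y) :
    HasDerivAt (myG c) (myF c y) y := by
  have hsc : (0:ℝ) < Real.sqrt c := Real.sqrt_pos.2 hc
  have hsy : (0:ℝ) < Real.sqrt y := Real.sqrt_pos.2 hy
  have h1 : HasDerivAt (fun y : ℝ => Real.sqrt y / Real.sqrt c)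
      (1 / (2 * Real.sqrt y) / Real.sqrt c) y := (Real.hasDerivAt_sqrt hy.ne').div_const _
  have h2 := (Real.hasDerivAt_arctan (Real.sqrt y / Real.sqrt c)).comp y h1
  have h3 := h2.const_mul (2 / Real.sqrt c)
  have h4 : HasDerivAt (myG c)
      (2 / Real.sqrt c * (1 / (1 + (Real.sqrt y / Real.sqrt c) ^ 2) * (1 / (2 * Real.sqrt y) / Real.sqrt c))) y := h3
  convert h4 using 1
  have hyy : Real.sqrt y ^ 2 = y := Real.sq_sqrt hy.le
  have hcc : Real.sqrt c ^ 2 = c := Real.sq_sqrt hc.le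
  rw [myF]
  rw [div_pow, hyy, hcc]
  have hcy : c + y > 0 := by linarith
  field_simp
  linear_combination (Real.mul_self_sqrt hc.le)

lemma myConvexF {b : ℝ} (hb : 0 ≤ b) :
    ConvexOn ℝ (Ioi (0:ℝ)) (myF b) := by
  have hz : ConvexOn ℝ (Ioi (0:ℝ)) (fun z : ℝ => z⁻¹) := by
    simpa using convexOn_zpow (𝕜 := ℝ) (-1)
  have h1 : ConvexOn ℝ (Ioi (0:ℝ)) (fun u : ℝ => (b + u)⁻¹) := by
    refine ⟨convex_Ioi 0, fun x hx y hy a a' ha ha' hab => ?_⟩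
    have hx' : b + x ∈ Ioi (0:ℝ) := by have := mem_Ioi.1 hx; simp only [mem_Ioi]; linarith
    have hy' : b + y ∈ Ioi (0:ℝ) := by have := mem_Ioi.1 hy; simp only [mem_Ioi]; linarith
    have h := hz.2 hx' hy' ha ha' hab
    have harg : a • (b + x) + a' • (b + y) = b + (a • x + a' • y) := by
      simp only [smul_eq_mul]
      have hb2 : a * b + a' * b = b := by
        have h3 : (a + a') * b = b := by rw [hab, one_mul]
        linarith [h3]
      ring_nf
      ring_nf at hb2
      linarith
    rwa [harg] at h
  have himg : Real.sqrt '' Ioi (0:ℝ) = Ioi 0 := by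
    ext z; constructor
    · rintro ⟨u, hu, rfl⟩; exact Real.sqrt_pos.2 hu
    · intro hz2
      have hz3 := mem_Ioi.1 hz2
      exact ⟨z^2, mem_Ioi.2 (by positivity), Real.sqrt_sq hz3.le⟩
  have hanti : AntitoneOn (fun z : ℝ => z⁻¹) (Real.sqrt '' Ioi (0:ℝ)) := by
    rw [himg]; intro u hu v hv huv
    exact inv_anti₀ (mem_Ioi.1 hu) huv
  have hconc : ConcaveOn ℝ (Ioi (0:ℝ)) Real.sqrt :=
    Real.strictConcaveOn_sqrt.concaveOn.subset Ioi_subset_Ici_self (convex_Ioi 0)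
  have h2 : ConvexOn ℝ (Ioi (0:ℝ)) (fun u : ℝ => (Real.sqrt u)⁻¹) := by
    have := ConvexOn.comp_concaveOn (g := fun z : ℝ => z⁻¹) (f := Real.sqrt)
      (by rw [himg]; exact hz) hconc hanti
    exact this
  have ha1 : AntitoneOn (fun u : ℝ => (b + u)⁻¹) (Ioi (0:ℝ)) := by
    intro u hu v hv huv
    have : 0 < b + u := by have := mem_Ioi.1 hu; linarith
    exact inv_anti₀ this (by linarith)
  have ha2 : AntitoneOn (fun u : ℝ => (Real.sqrt u)⁻¹) (Ioi (0:ℝ)) := by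
    intro u hu v hv huv
    exact inv_anti₀ (Real.sqrt_pos.2 (mem_Ioi.1 hu)) (Real.sqrt_le_sqrt huv)
  have hgoal := h1.mul h2 (fun u hu => inv_nonneg.2 (by have := mem_Ioi.1 hu; linarith))
    (fun u hu => inv_nonneg.2 (Real.sqrt_nonneg u)) (ha1.monovaryOn ha2)
  have heq : myF b = ((fun u : ℝ => (b + u)⁻¹) * fun u : ℝ => (Real.sqrt u)⁻¹) := by
    funext u; simp [myF, mul_inv, mul_comm]
  rw [heq]
  exact hgoal

lemma myMidpointStep {c m : ℝ} (hc : 0 < c) (hm : (1:ℝ)/2 ≤ m) :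
    myF c m ≤ myG c (m + 1/2) - myG c (m - 1/2) := by
  set φ : ℝ → ℝ := fun s => myG c (m + s) - myG c (m - s) - s * (2 * myF c m) with hφdef
  have hFconv : ConvexOn ℝ (Ioi (0:ℝ)) (myF c) := myConvexF hc.le
  have hGcont : Continuous (myG c) := by
    unfold myG
    exact continuous_const.mul (Real.continuous_arctan.comp (Real.continuous_sqrt.div_const _))
  have hφcont : ContinuousOn φ (Icc 0 (1/2)) := by
    apply Continuous.continuousOn
    exact ((hGcont.comp (continuous_const.add continuous_id)).sub
      (hGcont.comp (continuous_const.sub continuous_id))).sub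
      (continuous_id.mul continuous_const)
  have hderiv : ∀ s ∈ interior (Icc (0:ℝ) (1/2)),
      HasDerivAt φ (myF c (m + s) + myF c (m - s) - 2 * myF c m) s := by
    intro s hs
    rw [interior_Icc] at hs
    obtain ⟨hs0, hs2⟩ := hs
    have hps : (0:ℝ) < m + s := by linarith
    have hms : (0:ℝ) < m - s := by linarith
    have hd1 : HasDerivAt (fun s : ℝ => myG c (m + s)) (myF c (m + s)) s := by
      simpa [Function.comp_def] using (myHasDerivAt_G hc hps).comp s ((hasDerivAt_id s).const_add m)
    have hd2 : HasDerivAt (fun s : ℝ => myG c (m - s)) (-myF c (m - s)) s := by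
      simpa [Function.comp_def] using (myHasDerivAt_G hc hms).comp s ((hasDerivAt_id s).const_sub m)
    have hd3 : HasDerivAt (fun s : ℝ => s * (2 * myF c m)) (2 * myF c m) s := by
      simpa using (hasDerivAt_id s).mul_const (2 * myF c m)
    have := (hd1.sub hd2).sub hd3
    rw [show myF c (m + s) + myF c (m - s) - 2 * myF c m
        = myF c (m + s) - -myF c (m - s) - 2 * myF c m by ring]
    exact this
  have hmono : MonotoneOn φ (Icc 0 (1/2)) := by
    apply monotoneOn_of_deriv_nonneg (convex_Icc _ _) hφcont
    · intro s hs
      exact ((hderiv s hs).differentiableAt).differentiableWithinAt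
    · intro s hs
      rw [(hderiv s hs).deriv]
      rw [interior_Icc] at hs
      obtain ⟨hs0, hs2⟩ := hs
      have hps : m + s ∈ Ioi (0:ℝ) := mem_Ioi.2 (by linarith)
      have hms : m - s ∈ Ioi (0:ℝ) := mem_Ioi.2 (by linarith)
      have h := hFconv.2 hps hms (by norm_num : (0:ℝ) ≤ 1/2) (by norm_num : (0:ℝ) ≤ 1/2)
        (by norm_num : (1:ℝ)/2 + 1/2 = 1)
      have harg : (1/2 : ℝ) • (m + s) + (1/2 : ℝ) • (m - s) = m := by
        simp only [smul_eq_mul]; ring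
      rw [harg] at h
      simp only [smul_eq_mul] at h
      linarith
  have h0 : φ 0 = 0 := by simp [hφdef]
  have hle := hmono (left_mem_Icc.2 (by norm_num)) (right_mem_Icc.2 (by norm_num))
    (by norm_num : (0:ℝ) ≤ 1/2)
  rw [h0] at hle
  simp only [hφdef] at hle
  linarith

lemma myKeyA (k : ℕ) :
    Summable (fun i : ℕ => (((i:ℝ) + (k:ℝ) + 1) * Real.sqrt ((i:ℝ) + 1/2))⁻¹) ∧
    ∑' i : ℕ, (((i:ℝ) + (k:ℝ) + 1) * Real.sqrt ((i:ℝ) + 1/2))⁻¹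
      ≤ π / Real.sqrt ((k:ℝ) + 1/2) := by
  set c : ℝ := (k:ℝ) + 1/2 with hcdef
  have hc : 0 < c := by positivity
  have hsc : 0 < Real.sqrt c := Real.sqrt_pos.2 hc
  have hnn : ∀ i : ℕ, 0 ≤ (((i:ℝ) + (k:ℝ) + 1) * Real.sqrt ((i:ℝ) + 1/2))⁻¹ := by
    intro i; positivity
  have hbound : ∀ N, ∑ i ∈ Finset.range N,
      (((i:ℝ) + (k:ℝ) + 1) * Real.sqrt ((i:ℝ) + 1/2))⁻¹ ≤ π / Real.sqrt c := by
    intro N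
    have step : ∀ i ∈ Finset.range N,
        (((i:ℝ) + (k:ℝ) + 1) * Real.sqrt ((i:ℝ) + 1/2))⁻¹
          ≤ myG c ((i:ℝ) + 1) - myG c (i:ℝ) := by
      intro i _
      have hm : (1:ℝ)/2 ≤ (i:ℝ) + 1/2 := by
        have : (0:ℝ) ≤ (i:ℝ) := Nat.cast_nonneg i
        linarith
      have h := myMidpointStep hc hm
      have e1 : (i:ℝ) + 1/2 + 1/2 = (i:ℝ) + 1 := by ring
      have e2 : (i:ℝ) + 1/2 - 1/2 = (i:ℝ) := by ring
      rw [e1, e2] at h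
      have hterm : (i:ℝ) + (k:ℝ) + 1 = c + ((i:ℝ) + 1/2) := by rw [hcdef]; ring
      rw [hterm]
      exact h
    calc ∑ i ∈ Finset.range N, (((i:ℝ) + (k:ℝ) + 1) * Real.sqrt ((i:ℝ) + 1/2))⁻¹
        ≤ ∑ i ∈ Finset.range N, (myG c ((i:ℝ) + 1) - myG c (i:ℝ)) := Finset.sum_le_sum step
      _ = myG c (N:ℝ) - myG c ((0:ℕ):ℝ) := by
          have := Finset.sum_range_sub (fun j : ℕ => myG c (j:ℝ)) N
          simpa using this
      _ ≤ π / Real.sqrt c := by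
          have h0 : myG c ((0:ℕ):ℝ) = 0 := by simp [myG]
          rw [h0, sub_zero, myG]
          have harctan := (Real.arctan_lt_pi_div_two (Real.sqrt (N:ℝ) / Real.sqrt c)).le
          have h2 : (0:ℝ) ≤ 2 / Real.sqrt c := by positivity
          calc (2 / Real.sqrt c) * Real.arctan (Real.sqrt (N:ℝ) / Real.sqrt c)
              ≤ (2 / Real.sqrt c) * (π / 2) := mul_le_mul_of_nonneg_left harctan h2
            _ = π / Real.sqrt c := by ring
  exact ⟨summable_of_sum_range_le hnn hbound, Real.tsum_le_of_sum_range_le hnn hbound⟩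


lemma myProdPow (g : ℕ → ℝ) (hg0 : ∀ k, 0 ≤ g k) (hg : Summable g) :
    ∀ n : ℕ, Summable (fun t : Fin n → ℕ => ∏ j, g (t j)) ∧
      (∑' t : Fin n → ℕ, ∏ j, g (t j)) = (∑' k, g k) ^ n := by
  intro n
  induction n with
  | zero =>
    have hu : HasSum (fun t : Fin 0 → ℕ => ∏ j, g (t j)) 1 := by
      simpa using hasSum_unique (fun t : Fin 0 → ℕ => ∏ j, g (t j))
    exact ⟨hu.summable, by rw [hu.tsum_eq, pow_zero]⟩
  | succ n ih =>
    obtain ⟨ihS, ihT⟩ := ih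
    have e : ℕ × (Fin n → ℕ) ≃ (Fin (n+1) → ℕ) := Fin.consEquiv (fun _ => ℕ)
    have hcomp : ∀ p : ℕ × (Fin n → ℕ),
        (∏ j, g ((Fin.consEquiv (fun _ => ℕ)) p j)) = g p.1 * ∏ j, g (p.2 j) := by
      rintro ⟨a, s⟩
      simp [Fin.prod_univ_succ]
    have hh : Summable (fun p : ℕ × (Fin n → ℕ) => g p.1 * ∏ j, g (p.2 j)) := by
      have h1 : (0:ℕ → ℝ) ≤ g := Pi.le_def.mpr fun k => hg0 k
      have h2 : (0:(Fin n → ℕ) → ℝ) ≤ (fun t : Fin n → ℕ => ∏ j, g (t j)) :=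
        Pi.le_def.mpr fun s => Finset.prod_nonneg fun j _ => hg0 _
      exact Summable.mul_of_nonneg (f := g) (g := fun t : Fin n → ℕ => ∏ j, g (t j))
        hg ihS h1 h2
    have hfib : ∀ a : ℕ, Summable (fun s : Fin n → ℕ => g a * ∏ j, g (s j)) :=
      fun a => ihS.mul_left (g a)
    have hsum : Summable (fun t : Fin (n+1) → ℕ => ∏ j, g (t j)) :=
      (Fin.consEquiv (fun _ => ℕ)).summable_iff.1 (hh.congr fun p => (hcomp p).symm)
    refine ⟨hsum, ?_⟩
    calc ∑' t : Fin (n+1) → ℕ, ∏ j, g (t j)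
        = ∑' p : ℕ × (Fin n → ℕ), g p.1 * ∏ j, g (p.2 j) := by
          rw [← Equiv.tsum_eq (Fin.consEquiv (fun _ => ℕ))
            (fun t : Fin (n+1) → ℕ => ∏ j, g (t j))]
          exact tsum_congr hcomp
      _ = ∑' a : ℕ, ∑' s : Fin n → ℕ, g a * ∏ j, g (s j) :=
          Summable.tsum_prod' (f := fun p : ℕ × (Fin n → ℕ) => g p.1 * ∏ j, g (p.2 j)) hh hfib
      _ = ∑' a : ℕ, g a * (∑' k, g k) ^ n := tsum_congr fun a => by rw [tsum_mul_left, ihT]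
      _ = (∑' k, g k) ^ (n + 1) := by rw [tsum_mul_right, pow_succ, mul_comm]

lemma myWeightedProd (g h : ℕ → ℝ) (hg0 : ∀ k, 0 ≤ g k) (hh0 : ∀ k, 0 ≤ h k)
    (hg : Summable g) (hgh : Summable fun k => g k * h k) (n : ℕ) :
    Summable (fun t : Fin (n+1) → ℕ => (∏ j, g (t j)) * h (t 0)) ∧
    (∑' t : Fin (n+1) → ℕ, (∏ j, g (t j)) * h (t 0))
      = (∑' k, g k * h k) * (∑' k, g k) ^ n := by
  obtain ⟨pS, pT⟩ := myProdPow g hg0 hg n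
  have hcomp : ∀ p : ℕ × (Fin n → ℕ),
      ((∏ j, g ((Fin.consEquiv (fun _ => ℕ)) p j)) * h ((Fin.consEquiv (fun _ => ℕ)) p 0))
        = (g p.1 * h p.1) * ∏ j, g (p.2 j) := by
    rintro ⟨a, s⟩
    simp [Fin.prod_univ_succ]
    ring
  have hh' : Summable (fun p : ℕ × (Fin n → ℕ) => (g p.1 * h p.1) * ∏ j, g (p.2 j)) := by
    have h1 : (0:ℕ → ℝ) ≤ (fun k => g k * h k) :=
      Pi.le_def.mpr fun k => mul_nonneg (hg0 k) (hh0 k)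
    have h2 : (0:(Fin n → ℕ) → ℝ) ≤ (fun t : Fin n → ℕ => ∏ j, g (t j)) :=
      Pi.le_def.mpr fun s => Finset.prod_nonneg fun j _ => hg0 _
    exact Summable.mul_of_nonneg (f := fun k => g k * h k)
      (g := fun t : Fin n → ℕ => ∏ j, g (t j)) hgh pS h1 h2
  have hfib : ∀ a : ℕ, Summable (fun s : Fin n → ℕ => (g a * h a) * ∏ j, g (s j)) :=
    fun a => pS.mul_left (g a * h a)
  have hsum : Summable (fun t : Fin (n+1) → ℕ => (∏ j, g (t j)) * h (t 0)) :=
    (Fin.consEquiv (fun _ => ℕ)).summable_iff.1 (hh'.congr fun p => (hcomp p).symm)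
  refine ⟨hsum, ?_⟩
  calc ∑' t : Fin (n+1) → ℕ, (∏ j, g (t j)) * h (t 0)
      = ∑' p : ℕ × (Fin n → ℕ), (g p.1 * h p.1) * ∏ j, g (p.2 j) := by
        rw [← Equiv.tsum_eq (Fin.consEquiv (fun _ => ℕ))
          (fun t : Fin (n+1) → ℕ => (∏ j, g (t j)) * h (t 0))]
        exact tsum_congr hcomp
    _ = ∑' a : ℕ, ∑' s : Fin n → ℕ, (g a * h a) * ∏ j, g (s j) :=
        Summable.tsum_prod' (f := fun p : ℕ × (Fin n → ℕ) => (g p.1 * h p.1) * ∏ j, g (p.2 j)) hh' hfib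
    _ = ∑' a : ℕ, (g a * h a) * (∑' k, g k) ^ n := tsum_congr fun a => by rw [tsum_mul_left, pT]
    _ = (∑' k, g k * h k) * (∑' k, g k) ^ n := by rw [tsum_mul_right]

theorem infinite_Z1_eigenvalue_bound_lambda_one (m : ℕ) (hm : 2 ≤ m)
    (mu : ℝ) (x : ℕ → ℝ)
    (hx : Summable fun i => |x i|) (hx0 : x ≠ 0)
    (heig : ∀ i : ℕ,
      (∑' k, |x k|) ^ ((2 : ℤ) - m) *
          ∑' t : Fin (m - 1) → ℕ,
            (∏ j, x (t j)) / ((i : ℝ) + (∑ j, ((t j : ℕ) : ℝ)) + 1) = mu * x i) :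
    |mu| ≤ π := by
  obtain ⟨n, rfl⟩ : ∃ n, m = n + 2 := ⟨m - 2, by omega⟩
  have habs0 : ∀ k : ℕ, 0 ≤ |x k| := fun k => abs_nonneg _
  obtain ⟨i0, hi0⟩ : ∃ i, x i ≠ 0 := Function.ne_iff.1 hx0
  have hS0 : 0 < ∑' k, |x k| :=
    lt_of_lt_of_le (abs_pos.2 hi0) (Summable.le_tsum hx i0 fun j _ => habs0 j)
  have hSn0 : (∑' k, |x k|) ^ n ≠ 0 := pow_ne_zero n hS0.ne'
  -- restate eigen equation
  have heig' : ∀ i : ℕ,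
      (∑' k, |x k|) ^ (-(n:ℤ)) *
          ∑' t : Fin (n+1) → ℕ,
            (∏ j, x (t j)) / ((i : ℝ) + (∑ j, ((t j : ℕ) : ℝ)) + 1) = mu * x i := by
    intro i
    have h := heig i
    have hexp : (2 : ℤ) - ((n+2 : ℕ) : ℤ) = -(n:ℤ) := by push_cast; ring
    rw [hexp] at h
    exact h
  -- summability of |x k| * (i+k+1)⁻¹ for each i
  have hsummk : ∀ i : ℕ, Summable (fun k : ℕ => |x k| * ((i:ℝ) + (k:ℝ) + 1)⁻¹) := by
    intro i
    apply Summable.of_nonneg_of_le (fun k => mul_nonneg (habs0 k) (by positivity))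
      (fun k => ?_) hx
    have h1 : ((i:ℝ) + (k:ℝ) + 1)⁻¹ ≤ 1 := by
      have h2 : (1:ℝ) ≤ (i:ℝ) + (k:ℝ) + 1 := by
        have := Nat.cast_nonneg (α := ℝ) i
        have := Nat.cast_nonneg (α := ℝ) k
        linarith
      rw [inv_le_one_iff₀]
      right; exact h2
    exact mul_le_of_le_one_right (habs0 k) h1
  -- the key pointwise bound
  have key : ∀ i : ℕ, |mu| * |x i| ≤ ∑' k, |x k| * ((i:ℝ) + (k:ℝ) + 1)⁻¹ := by
    intro i
    obtain ⟨WS, WT⟩ := myWeightedProd (fun k => |x k|) (fun k => ((i:ℝ) + (k:ℝ) + 1)⁻¹)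
      habs0 (fun k => by positivity) hx (hsummk i) n
    have hptle : ∀ t : Fin (n+1) → ℕ,
        |(∏ j, x (t j)) / ((i : ℝ) + (∑ j, ((t j : ℕ) : ℝ)) + 1)|
          ≤ (∏ j, |x (t j)|) * ((i:ℝ) + ((t 0 : ℕ):ℝ) + 1)⁻¹ := by
      intro t
      have hd0 : (0:ℝ) < (i : ℝ) + (∑ j, ((t j : ℕ) : ℝ)) + 1 := by positivity
      rw [abs_div, abs_of_pos hd0, Finset.abs_prod, div_eq_mul_inv]
      apply mul_le_mul_of_nonneg_left _ (Finset.prod_nonneg fun j _ => habs0 _)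
      apply inv_anti₀ (by positivity)
      have h0le : ((t 0 : ℕ):ℝ) ≤ ∑ j, ((t j : ℕ) : ℝ) :=
        Finset.single_le_sum (f := fun j => ((t j : ℕ):ℝ))
          (fun j _ => Nat.cast_nonneg _) (Finset.mem_univ 0)
      linarith
    have hsummAbs : Summable (fun t : Fin (n+1) → ℕ =>
        |(∏ j, x (t j)) / ((i : ℝ) + (∑ j, ((t j : ℕ) : ℝ)) + 1)|) :=
      Summable.of_nonneg_of_le (fun t => abs_nonneg _) hptle WS
    have hsummT : Summable (fun t : Fin (n+1) → ℕ =>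
        (∏ j, x (t j)) / ((i : ℝ) + (∑ j, ((t j : ℕ) : ℝ)) + 1)) := hsummAbs.of_abs
    have habsT : |∑' t : Fin (n+1) → ℕ,
        (∏ j, x (t j)) / ((i : ℝ) + (∑ j, ((t j : ℕ) : ℝ)) + 1)|
          ≤ (∑' k, |x k| * ((i:ℝ) + (k:ℝ) + 1)⁻¹) * (∑' k, |x k|) ^ n := by
      calc |∑' t : Fin (n+1) → ℕ, (∏ j, x (t j)) / ((i : ℝ) + (∑ j, ((t j : ℕ) : ℝ)) + 1)|
          ≤ ∑' t : Fin (n+1) → ℕ,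
              |(∏ j, x (t j)) / ((i : ℝ) + (∑ j, ((t j : ℕ) : ℝ)) + 1)| := by
            have hnorm := norm_tsum_le_tsum_norm
              (f := fun t : Fin (n+1) → ℕ =>
                (∏ j, x (t j)) / ((i : ℝ) + (∑ j, ((t j : ℕ) : ℝ)) + 1))
              (hsummAbs.congr fun t => (Real.norm_eq_abs _).symm)
            simpa only [Real.norm_eq_abs] using hnorm
        _ ≤ ∑' t : Fin (n+1) → ℕ, (∏ j, |x (t j)|) * ((i:ℝ) + ((t 0 : ℕ):ℝ) + 1)⁻¹ :=
            Summable.tsum_le_tsum hptle hsummAbs WS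
        _ = (∑' k, |x k| * ((i:ℝ) + (k:ℝ) + 1)⁻¹) * (∑' k, |x k|) ^ n := WT
    have heq := heig' i
    calc |mu| * |x i| = |mu * x i| := (abs_mul mu (x i)).symm
      _ = |(∑' k, |x k|) ^ (-(n:ℤ))| * |∑' t : Fin (n+1) → ℕ,
            (∏ j, x (t j)) / ((i : ℝ) + (∑ j, ((t j : ℕ) : ℝ)) + 1)| := by
          rw [← heq, abs_mul]
      _ = ((∑' k, |x k|) ^ n)⁻¹ * |∑' t : Fin (n+1) → ℕ,
            (∏ j, x (t j)) / ((i : ℝ) + (∑ j, ((t j : ℕ) : ℝ)) + 1)| := by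
          rw [abs_of_pos (zpow_pos hS0 _), zpow_neg, zpow_natCast]
      _ ≤ ((∑' k, |x k|) ^ n)⁻¹ *
            ((∑' k, |x k| * ((i:ℝ) + (k:ℝ) + 1)⁻¹) * (∑' k, |x k|) ^ n) := by
          apply mul_le_mul_of_nonneg_left habsT
          positivity
      _ = ∑' k, |x k| * ((i:ℝ) + (k:ℝ) + 1)⁻¹ := by
          field_simp
  -- weights
  set w : ℕ → ℝ := fun i => (Real.sqrt ((i:ℝ) + 1/2))⁻¹ with hwdef
  have hw0 : ∀ i : ℕ, 0 < w i := fun i => inv_pos.2 (Real.sqrt_pos.2 (by positivity))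
  have hwle : ∀ i : ℕ, w i ≤ 2 := by
    intro i
    have h1 : (1:ℝ)/2 ≤ Real.sqrt ((i:ℝ) + 1/2) := by
      have h2 : Real.sqrt (1/4) ≤ Real.sqrt ((i:ℝ) + 1/2) := by
        apply Real.sqrt_le_sqrt
        have := Nat.cast_nonneg (α := ℝ) i
        linarith
      calc (1:ℝ)/2 = Real.sqrt (1/4) := by
            rw [show (1:ℝ)/4 = (1/2)^2 by norm_num, Real.sqrt_sq (by norm_num)]
        _ ≤ _ := h2
    calc w i ≤ ((1:ℝ)/2)⁻¹ := inv_anti₀ (by norm_num) h1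
      _ = 2 := by norm_num
  have hwx : Summable (fun i => w i * |x i|) :=
    Summable.of_nonneg_of_le (fun i => mul_nonneg (hw0 i).le (habs0 i))
      (fun i => mul_le_mul_of_nonneg_right (hwle i) (habs0 i)) (hx.mul_left 2)
  -- Hilbert-type bound with weights
  have hkA : ∀ k : ℕ, Summable (fun i : ℕ => w i * ((i:ℝ) + (k:ℝ) + 1)⁻¹) ∧
      ∑' i : ℕ, w i * ((i:ℝ) + (k:ℝ) + 1)⁻¹ ≤ π * w k := by
    intro k
    obtain ⟨hs, hb⟩ := myKeyA k
    have heqf : (fun i : ℕ => w i * ((i:ℝ) + (k:ℝ) + 1)⁻¹)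
        = fun i : ℕ => (((i:ℝ) + (k:ℝ) + 1) * Real.sqrt ((i:ℝ) + 1/2))⁻¹ := by
      funext i
      rw [hwdef, mul_inv]
      ring
    rw [heqf]
    refine ⟨hs, hb.trans_eq ?_⟩
    rw [hwdef, div_eq_mul_inv]
  -- ENNReal chain
  set T : ENNReal := ∑' i, ENNReal.ofReal (w i * |x i|) with hTdef
  have hT_eq : T = ENNReal.ofReal (∑' i, w i * |x i|) :=
    (ENNReal.ofReal_tsum_of_nonneg (fun i => mul_nonneg (hw0 i).le (habs0 i)) hwx).symm
  have hTtop : T ≠ ⊤ := by rw [hT_eq]; exact ENNReal.ofReal_ne_top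
  have hT0 : T ≠ 0 := by
    have hpos : 0 < ∑' i, w i * |x i| :=
      lt_of_lt_of_le (mul_pos (hw0 i0) (abs_pos.2 hi0))
        (Summable.le_tsum hwx i0 fun j _ => mul_nonneg (hw0 j).le (habs0 j))
    rw [hT_eq]
    exact (ENNReal.ofReal_pos.2 hpos).ne'
  have chain : ENNReal.ofReal |mu| * T ≤ ENNReal.ofReal π * T := by
    calc ENNReal.ofReal |mu| * T = ∑' i, ENNReal.ofReal (|mu| * (w i * |x i|)) := by
          rw [hTdef, ← ENNReal.tsum_mul_left]
          exact tsum_congr fun i => (ENNReal.ofReal_mul (abs_nonneg mu)).symm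
      _ ≤ ∑' i, ∑' k, ENNReal.ofReal (w i * (|x k| * ((i:ℝ) + (k:ℝ) + 1)⁻¹)) := by
          apply ENNReal.tsum_le_tsum
          intro i
          have h1 : |mu| * (w i * |x i|) ≤ w i * ∑' k, |x k| * ((i:ℝ) + (k:ℝ) + 1)⁻¹ := by
            have := mul_le_mul_of_nonneg_left (key i) (hw0 i).le
            calc |mu| * (w i * |x i|) = w i * (|mu| * |x i|) := by ring
              _ ≤ _ := this
          have h2 : w i * ∑' k, |x k| * ((i:ℝ) + (k:ℝ) + 1)⁻¹
              = ∑' k, w i * (|x k| * ((i:ℝ) + (k:ℝ) + 1)⁻¹) := by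
            rw [tsum_mul_left]
          calc ENNReal.ofReal (|mu| * (w i * |x i|))
              ≤ ENNReal.ofReal (∑' k, w i * (|x k| * ((i:ℝ) + (k:ℝ) + 1)⁻¹)) := by
                apply ENNReal.ofReal_le_ofReal
                rw [← h2]
                exact h1
            _ = ∑' k, ENNReal.ofReal (w i * (|x k| * ((i:ℝ) + (k:ℝ) + 1)⁻¹)) := by
                apply ENNReal.ofReal_tsum_of_nonneg
                · intro k
                  exact mul_nonneg (hw0 i).le (mul_nonneg (habs0 k) (by positivity))
                · exact (hsummk i).mul_left (w i)
      _ = ∑' k, ∑' i, ENNReal.ofReal (w i * (|x k| * ((i:ℝ) + (k:ℝ) + 1)⁻¹)) :=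
          ENNReal.tsum_comm
      _ ≤ ∑' k, ENNReal.ofReal (π * (w k * |x k|)) := by
          apply ENNReal.tsum_le_tsum
          intro k
          have hre : ∀ i : ℕ, w i * (|x k| * ((i:ℝ) + (k:ℝ) + 1)⁻¹)
              = |x k| * (w i * ((i:ℝ) + (k:ℝ) + 1)⁻¹) := fun i => by ring
          calc ∑' i, ENNReal.ofReal (w i * (|x k| * ((i:ℝ) + (k:ℝ) + 1)⁻¹))
              = ∑' i, ENNReal.ofReal |x k| * ENNReal.ofReal (w i * ((i:ℝ) + (k:ℝ) + 1)⁻¹) := by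
                refine tsum_congr fun i => ?_
                rw [hre i, ENNReal.ofReal_mul (habs0 k)]
            _ = ENNReal.ofReal |x k| * ∑' i, ENNReal.ofReal (w i * ((i:ℝ) + (k:ℝ) + 1)⁻¹) :=
                ENNReal.tsum_mul_left
            _ = ENNReal.ofReal |x k| * ENNReal.ofReal (∑' i, w i * ((i:ℝ) + (k:ℝ) + 1)⁻¹) := by
                rw [ENNReal.ofReal_tsum_of_nonneg
                  (fun i => mul_nonneg (hw0 i).le (by positivity)) (hkA k).1]
            _ ≤ ENNReal.ofReal |x k| * ENNReal.ofReal (π * w k) := by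
                apply mul_le_mul_right
                exact ENNReal.ofReal_le_ofReal (hkA k).2
            _ = ENNReal.ofReal (π * (w k * |x k|)) := by
                rw [← ENNReal.ofReal_mul (habs0 k)]
                congr 1
                ring
      _ = ENNReal.ofReal π * T := by
          rw [hTdef, ← ENNReal.tsum_mul_left]
          exact tsum_congr fun k => by rw [← ENNReal.ofReal_mul Real.pi_pos.le]
  have hfinal : ENNReal.ofReal |mu| ≤ ENNReal.ofReal π := by
    rw [mul_comm (ENNReal.ofReal |mu|) T, mul_comm (ENNReal.ofReal π) T] at chain
    exact (ENNReal.mul_le_mul_iff_right hT0 hTtop).1 chain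
  exact (ENNReal.ofReal_le_ofReal_iff Real.pi_pos.le).1 hfinal
end
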